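/- arXiv:1208.2573 — 7 statements merged into one kernel-verified Lean document; each statement's English description precedes it below -/
import Mathlib

section
/- Let f : [a,b] → ℝ (a < b) be such that the derivative f′ is absolutely continuous on [a,b]. Then for all x ∈ [a, (a+b)/2] the identity (1/(b−a))∫_a^b f(t) dt − (1/2)[f(x) + f(a+b−x)] + (1/2)(x − (3a+b)/4)[f′(x) − f′(a+b−x)] = (1/(2(b−a)))[∫_a^x (t−a)² f″(t) dt + ∫_x^{a+b−x} (t − (a+b)/2)² f″(t) dt + ∫_{a+b−x}^b (t−b)² f″(t) dt] holds. -/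
open MeasureTheory

lemma key_ibp (f f' f'' : ℝ → ℝ) (p q c : ℝ)
    (hf' : ∀ t ∈ Set.uIcc p q, HasDerivAt f (f' t) t)
    (hf'' : ∀ t ∈ Set.uIcc p q, HasDerivAt f' (f'' t) t)
    (hint : IntervalIntegrable f'' volume p q) :
    ∫ t in p..q, (t - c) ^ 2 * f'' t
      = (q - c) ^ 2 * f' q - (p - c) ^ 2 * f' p
        - (2 * (q - c) * f q - 2 * (p - c) * f p) + 2 * ∫ t in p..q, f t := by
  have hf'c : ContinuousOn f' (Set.uIcc p q) :=
    fun t ht => (hf'' t ht).continuousAt.continuousWithinAt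
  have hfc : ContinuousOn f (Set.uIcc p q) :=
    fun t ht => (hf' t ht).continuousAt.continuousWithinAt
  have hf'int : IntervalIntegrable f' volume p q := hf'c.intervalIntegrable
  have hfint : IntervalIntegrable f volume p q := hfc.intervalIntegrable
  have hu : ∀ t ∈ Set.uIcc p q, HasDerivAt (fun s => (s - c) ^ 2) (2 * (t - c)) t := by
    intro t _
    have := ((hasDerivAt_id t).sub_const c).pow 2
    simp at this; exact this
  have h1 := intervalIntegral.integral_mul_deriv_eq_deriv_mul hu hf''
    ((continuous_const.mul (continuous_id.sub continuous_const)).intervalIntegrable p q)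
    hint
  have hu2 : ∀ t ∈ Set.uIcc p q, HasDerivAt (fun s => 2 * (s - c)) 2 t := by
    intro t _
    have := ((hasDerivAt_id t).sub_const c).const_mul 2
    simpa using this
  have h2 := intervalIntegral.integral_mul_deriv_eq_deriv_mul hu2 hf'
    (continuous_const.intervalIntegrable p q) hf'int
  rw [h1, h2, intervalIntegral.integral_const_mul]
  ring

theorem stmt0 (a b : ℝ) (hab : a < b) (f f' f'' : ℝ → ℝ)
    (hf' : ∀ t ∈ Set.Icc a b, HasDerivAt f (f' t) t)
    (hf'' : ∀ t ∈ Set.Icc a b, HasDerivAt f' (f'' t) t)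
    (hint : IntervalIntegrable f'' volume a b) :
    ∀ x ∈ Set.Icc a ((a + b) / 2),
      ((1 / (b - a)) * ∫ t in a..b, f t) - (1 / 2) * (f x + f (a + b - x))
          + (1 / 2) * (x - (3 * a + b) / 4) * (f' x - f' (a + b - x))
        = (1 / (2 * (b - a))) *
            ((∫ t in a..x, (t - a) ^ 2 * f'' t)
              + (∫ t in x..(a + b - x), (t - (a + b) / 2) ^ 2 * f'' t)
              + (∫ t in (a + b - x)..b, (t - b) ^ 2 * f'' t)) := by
  intro x hx
  obtain ⟨hax, hxm⟩ := hx
  have hxb : x ≤ b := le_trans hxm (by linarith)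
  have hay : a ≤ a + b - x := by linarith
  have hyb : a + b - x ≤ b := by linarith
  have hxy : x ≤ a + b - x := by linarith
  -- subinterval inclusions
  have s1 : Set.uIcc a x ⊆ Set.Icc a b := by
    rw [Set.uIcc_of_le hax]; exact Set.Icc_subset_Icc le_rfl hxb
  have s2 : Set.uIcc x (a + b - x) ⊆ Set.Icc a b := by
    rw [Set.uIcc_of_le hxy]; exact Set.Icc_subset_Icc hax hyb
  have s3 : Set.uIcc (a + b - x) b ⊆ Set.Icc a b := by
    rw [Set.uIcc_of_le hyb]; exact Set.Icc_subset_Icc hay le_rfl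
  have sub1 : Set.uIcc a x ⊆ Set.uIcc a b := by
    rw [Set.uIcc_of_le hab.le]; exact s1
  have sub2 : Set.uIcc x (a + b - x) ⊆ Set.uIcc a b := by
    rw [Set.uIcc_of_le hab.le]; exact s2
  have sub3 : Set.uIcc (a + b - x) b ⊆ Set.uIcc a b := by
    rw [Set.uIcc_of_le hab.le]; exact s3
  have k1 := key_ibp f f' f'' a x a (fun t ht => hf' t (s1 ht))
    (fun t ht => hf'' t (s1 ht)) (hint.mono_set sub1)
  have k2 := key_ibp f f' f'' x (a + b - x) ((a + b) / 2) (fun t ht => hf' t (s2 ht))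
    (fun t ht => hf'' t (s2 ht)) (hint.mono_set sub2)
  have k3 := key_ibp f f' f'' (a + b - x) b b (fun t ht => hf' t (s3 ht))
    (fun t ht => hf'' t (s3 ht)) (hint.mono_set sub3)
  -- f integrable on pieces, additivity
  have hfc : ContinuousOn f (Set.Icc a b) :=
    fun t ht => (hf' t ht).continuousAt.continuousWithinAt
  have i1 : IntervalIntegrable f volume a x := (hfc.mono s1).intervalIntegrable
  have i2 : IntervalIntegrable f volume x (a + b - x) := (hfc.mono s2).intervalIntegrable
  have i3 : IntervalIntegrable f volume (a + b - x) b := (hfc.mono s3).intervalIntegrable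
  have hadd : (∫ t in a..x, f t) + (∫ t in x..(a + b - x), f t) + (∫ t in (a + b - x)..b, f t)
      = ∫ t in a..b, f t := by
    rw [intervalIntegral.integral_add_adjacent_intervals i1 i2,
      intervalIntegral.integral_add_adjacent_intervals (i1.trans i2) i3]
  rw [k1, k2, k3, ← hadd]
  have hba : b - a ≠ 0 := by linarith
  field_simp
  ring
end

section
/- Let f : [a,b] → ℝ (a < b) be such that f′ is absolutely continuous on [a,b] and f″ ∈ L¹[a,b]. If |f″| is s-convex in the second sense on [a,b] for some fixed s ∈ (0,1], then for all x ∈ [a, (a+b)/2]: |(1/(b−a))∫_a^b f(t) dt − (1/2)[f(x)+f(a+b−x)] + (1/2)(x − (3a+b)/4)[f′(x) − f′(a+b−x)]| ≤ ((x−a)³/((s+1)(s+2)(s+3)(b−a)))[|f″(a)| + |f″(b)|] + ((4(s²+3s+2)(x−a)³ + (s²+s+2)(a+b−2x)³)/(8(s+1)(s+2)(s+3)(b−a)))[|f″(x)| + |f″(a+b−x)|]. -/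
open MeasureTheory

def SConvexOn (s : ℝ) (D : Set ℝ) (g : ℝ → ℝ) : Prop :=
  ∀ x ∈ D, ∀ y ∈ D, ∀ α β : ℝ, 0 ≤ α → 0 ≤ β → α + β = 1 →
    g (α * x + β * y) ≤ α ^ s * g x + β ^ s * g y

lemma aux_deriv (c m s : ℝ) (hs : 0 < s) (t : ℝ) (ht : c ≤ t) :
    HasDerivAt (fun u => (u - m) ^ 2 * (u - c) ^ (s + 1) / (s + 1)
        - 2 * (u - m) * (u - c) ^ (s + 2) / ((s + 1) * (s + 2))
        + 2 * (u - c) ^ (s + 3) / ((s + 1) * (s + 2) * (s + 3)))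
      ((t - m) ^ 2 * (t - c) ^ s) t := by
  have hs1 : (0:ℝ) < s + 1 := by linarith
  have hs2 : (0:ℝ) < s + 2 := by linarith
  have hs3 : (0:ℝ) < s + 3 := by linarith
  have hid : HasDerivAt (fun u : ℝ => u - c) 1 t := (hasDerivAt_id t).sub_const c
  have hidm : HasDerivAt (fun u : ℝ => u - m) 1 t := (hasDerivAt_id t).sub_const m
  have h1 : HasDerivAt (fun u : ℝ => (u - c) ^ (s + 1)) ((s+1) * (t - c) ^ s) t := by
    have := hid.rpow_const (p := s + 1) (Or.inr (by linarith))
    simpa using this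
  have h2 : HasDerivAt (fun u : ℝ => (u - c) ^ (s + 2)) ((s+2) * (t - c) ^ (s+1)) t := by
    have := hid.rpow_const (p := s + 2) (Or.inr (by linarith))
    simpa [show s + 2 - 1 = s + 1 by ring] using this
  have h3 : HasDerivAt (fun u : ℝ => (u - c) ^ (s + 3)) ((s+3) * (t - c) ^ (s+2)) t := by
    have := hid.rpow_const (p := s + 3) (Or.inr (by linarith))
    simpa [show s + 3 - 1 = s + 2 by ring] using this
  have hsq : HasDerivAt (fun u : ℝ => (u - m) ^ 2) (2 * (t - m)) t := by
    simpa using hidm.fun_pow 2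
  have key : HasDerivAt (fun u => (u - m) ^ 2 * (u - c) ^ (s + 1) / (s + 1)
        - 2 * (u - m) * (u - c) ^ (s + 2) / ((s + 1) * (s + 2))
        + 2 * (u - c) ^ (s + 3) / ((s + 1) * (s + 2) * (s + 3)))
      ((2 * (t - m) * (t - c) ^ (s+1) + (t - m) ^ 2 * ((s+1) * (t - c) ^ s)) / (s + 1)
        - (2 * 1 * (t - c) ^ (s+2) + 2 * (t - m) * ((s+2) * (t - c) ^ (s+1))) / ((s + 1) * (s + 2))
        + 2 * ((s+3) * (t - c) ^ (s+2)) / ((s + 1) * (s + 2) * (s + 3))) t := by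
    exact (((hsq.mul h1).div_const _).sub
      ((((hidm.const_mul 2).mul h2)).div_const _)).add ((h3.const_mul 2).div_const _)
  convert key using 1
  rcases eq_or_lt_of_le ht with h | h
  · simp [← h, Real.zero_rpow hs1.ne', Real.zero_rpow hs2.ne', Real.zero_rpow hs.ne']
  · have hpos : 0 < t - c := by linarith
    have e1 : (t - c) ^ (s + 1) = (t - c) ^ s * (t - c) := by
      rw [Real.rpow_add hpos, Real.rpow_one]
    have e2 : (t - c) ^ (s + 2) = (t - c) ^ s * (t - c) ^ 2 := by
      rw [show s + 2 = s + (2:ℕ) by norm_num, Real.rpow_add_natCast hpos.ne']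
    field_simp
    ring

lemma integ_L1 (c d m s : ℝ) (hcd : c ≤ d) (hs : 0 < s) :
    ∫ t in c..d, (t - m) ^ 2 * (t - c) ^ s
      = (d - m) ^ 2 * (d - c) ^ (s + 1) / (s + 1)
        - 2 * (d - m) * (d - c) ^ (s + 2) / ((s + 1) * (s + 2))
        + 2 * (d - c) ^ (s + 3) / ((s + 1) * (s + 2) * (s + 3)) := by
  have hcont : ContinuousOn (fun t : ℝ => (t - m) ^ 2 * (t - c) ^ s) (Set.uIcc c d) := by
    apply ContinuousOn.mul
    · fun_prop
    · exact ((continuous_id.sub continuous_const).continuousOn).rpow_const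
        (fun t _ => Or.inr hs.le)
  have := intervalIntegral.integral_eq_sub_of_hasDerivAt (a := c) (b := d)
    (f := fun u => (u - m) ^ 2 * (u - c) ^ (s + 1) / (s + 1)
        - 2 * (u - m) * (u - c) ^ (s + 2) / ((s + 1) * (s + 2))
        + 2 * (u - c) ^ (s + 3) / ((s + 1) * (s + 2) * (s + 3)))
    (f' := fun t => (t - m) ^ 2 * (t - c) ^ s)
    (fun t ht => aux_deriv c m s hs t (by
      rw [Set.uIcc_of_le hcd] at ht; exact ht.1))
    (hcont.intervalIntegrable)
  rw [this]
  have h0 : ((0:ℝ)) ^ (s+1) = 0 := Real.zero_rpow (by linarith)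
  have h02 : ((0:ℝ)) ^ (s+2) = 0 := Real.zero_rpow (by linarith)
  have h03 : ((0:ℝ)) ^ (s+3) = 0 := Real.zero_rpow (by linarith)
  simp [h0, h02, h03]

lemma integ_L2 (c d m s : ℝ) (hcd : c ≤ d) (hs : 0 < s) :
    ∫ t in c..d, (t - m) ^ 2 * (d - t) ^ s
      = (c - m) ^ 2 * (d - c) ^ (s + 1) / (s + 1)
        + 2 * (c - m) * (d - c) ^ (s + 2) / ((s + 1) * (s + 2))
        + 2 * (d - c) ^ (s + 3) / ((s + 1) * (s + 2) * (s + 3)) := by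
  have h := intervalIntegral.integral_comp_sub_left (a := c) (b := d)
    (fun u => (u - (c + d - m)) ^ 2 * (u - c) ^ s) (c + d)
  simp only [add_sub_cancel_right, add_sub_cancel_left] at h
  have e : ∀ t : ℝ, (c + d - t - (c + d - m)) ^ 2 * (c + d - t - c) ^ s
      = (t - m) ^ 2 * (d - t) ^ s := by
    intro t
    have : (c + d - t - (c + d - m)) ^ 2 = (t - m) ^ 2 := by ring
    rw [this, show c + d - t - c = d - t by ring]
  rw [show (∫ t in c..d, (t - m) ^ 2 * (d - t) ^ s)
      = ∫ t in c..d, (c + d - t - (c + d - m)) ^ 2 * (c + d - t - c) ^ s by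
    congr 1; ext t; rw [e t]]
  rw [h, integ_L1 c d (c + d - m) s hcd hs]
  have : d - (c + d - m) = m - c := by ring
  rw [this]
  ring

lemma piece_bound (a b : ℝ) (f'' : ℝ → ℝ)
    (hint : IntervalIntegrable f'' volume a b)
    (s : ℝ) (hs : 0 < s)
    (hconv : SConvexOn s (Set.Icc a b) (fun t => |f'' t|))
    (c d m : ℝ) (hac : a ≤ c) (hcd : c ≤ d) (hdb : d ≤ b) :
    |∫ t in c..d, (t - m) ^ 2 * f'' t|
      ≤ ((c - m) ^ 2 * (d - c) / (s + 1) + 2 * (c - m) * (d - c) ^ 2 / ((s + 1) * (s + 2))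
            + 2 * (d - c) ^ 3 / ((s + 1) * (s + 2) * (s + 3))) * |f'' c|
        + ((d - m) ^ 2 * (d - c) / (s + 1) - 2 * (d - m) * (d - c) ^ 2 / ((s + 1) * (s + 2))
            + 2 * (d - c) ^ 3 / ((s + 1) * (s + 2) * (s + 3))) * |f'' d| := by
  rcases eq_or_lt_of_le hcd with rfl | hlt
  · simp
  have hdc : (0:ℝ) < d - c := by linarith
  have hP : (0:ℝ) < (d - c) ^ s := Real.rpow_pos_of_pos hdc s
  have hs1 : (0:ℝ) < s + 1 := by linarith
  have hs2 : (0:ℝ) < s + 2 := by linarith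
  have hs3 : (0:ℝ) < s + 3 := by linarith
  have hintcd : IntervalIntegrable f'' volume c d :=
    hint.mono_set (Set.uIcc_subset_uIcc (by simp [Set.mem_uIcc]; left; exact ⟨hac, le_trans hcd hdb⟩)
      (by simp [Set.mem_uIcc]; left; exact ⟨le_trans hac hcd, hdb⟩))
  have hcontsq : ContinuousOn (fun t : ℝ => (t - m) ^ 2) (Set.uIcc c d) := by fun_prop
  have hint2 : IntervalIntegrable (fun t => (t - m) ^ 2 * |f'' t|) volume c d :=
    hintcd.abs.continuousOn_mul hcontsq
  have hcont_w1 : ContinuousOn (fun t : ℝ => (t - m) ^ 2 * ((d - t) ^ s / (d - c) ^ s * |f'' c|)) (Set.uIcc c d) := by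
    apply hcontsq.mul
    apply ContinuousOn.mul _ continuousOn_const
    apply ContinuousOn.div _ continuousOn_const (fun t _ => hP.ne')
    exact ((continuous_const.sub continuous_id).continuousOn).rpow_const (fun t _ => Or.inr hs.le)
  have hcont_w2 : ContinuousOn (fun t : ℝ => (t - m) ^ 2 * ((t - c) ^ s / (d - c) ^ s * |f'' d|)) (Set.uIcc c d) := by
    apply hcontsq.mul
    apply ContinuousOn.mul _ continuousOn_const
    apply ContinuousOn.div _ continuousOn_const (fun t _ => hP.ne')
    exact ((continuous_id.sub continuous_const).continuousOn).rpow_const (fun t _ => Or.inr hs.le)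
  have step1 : |∫ t in c..d, (t - m) ^ 2 * f'' t| ≤ ∫ t in c..d, (t - m) ^ 2 * |f'' t| := by
    calc |∫ t in c..d, (t - m) ^ 2 * f'' t| ≤ ∫ t in c..d, |(t - m) ^ 2 * f'' t| :=
          intervalIntegral.abs_integral_le_integral_abs hcd
      _ = ∫ t in c..d, (t - m) ^ 2 * |f'' t| := by
          congr 1; ext t; rw [abs_mul, abs_of_nonneg (sq_nonneg _)]
  have step2 : ∀ t ∈ Set.Icc c d, (t - m) ^ 2 * |f'' t|
      ≤ (t - m) ^ 2 * ((d - t) ^ s / (d - c) ^ s * |f'' c|)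
        + (t - m) ^ 2 * ((t - c) ^ s / (d - c) ^ s * |f'' d|) := by
    intro t ht
    have hα : (0:ℝ) ≤ (d - t) / (d - c) := by
      apply div_nonneg _ hdc.le; linarith [ht.2]
    have hβ : (0:ℝ) ≤ (t - c) / (d - c) := by
      apply div_nonneg _ hdc.le; linarith [ht.1]
    have hsum : (d - t) / (d - c) + (t - c) / (d - c) = 1 := by
      field_simp
      ring
    have hc' : c ∈ Set.Icc a b := ⟨hac, le_trans hcd hdb⟩
    have hd' : d ∈ Set.Icc a b := ⟨le_trans hac hcd, hdb⟩
    have h := hconv c hc' d hd' _ _ hα hβ hsum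
    have harg : (d - t) / (d - c) * c + (t - c) / (d - c) * d = t := by
      field_simp; ring
    rw [harg] at h
    have e1 : ((d - t) / (d - c)) ^ s = (d - t) ^ s / (d - c) ^ s :=
      Real.div_rpow (show (0:ℝ) ≤ d - t by linarith [ht.2]) hdc.le s
    have e2 : ((t - c) / (d - c)) ^ s = (t - c) ^ s / (d - c) ^ s :=
      Real.div_rpow (show (0:ℝ) ≤ t - c by linarith [ht.1]) hdc.le s
    rw [e1, e2] at h
    have := mul_le_mul_of_nonneg_left h (sq_nonneg (t - m))
    calc (t - m) ^ 2 * |f'' t| ≤ (t - m) ^ 2 * ((d - t) ^ s / (d - c) ^ s * |f'' c|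
        + (t - c) ^ s / (d - c) ^ s * |f'' d|) := this
      _ = _ := by ring
  have step3 : (∫ t in c..d, (t - m) ^ 2 * |f'' t|)
      ≤ ∫ t in c..d, ((t - m) ^ 2 * ((d - t) ^ s / (d - c) ^ s * |f'' c|)
        + (t - m) ^ 2 * ((t - c) ^ s / (d - c) ^ s * |f'' d|)) := by
    apply intervalIntegral.integral_mono_on hcd hint2
      (hcont_w1.intervalIntegrable.add hcont_w2.intervalIntegrable)
    exact step2
  have split : (∫ t in c..d, ((t - m) ^ 2 * ((d - t) ^ s / (d - c) ^ s * |f'' c|)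
        + (t - m) ^ 2 * ((t - c) ^ s / (d - c) ^ s * |f'' d|)))
      = (|f'' c| / (d - c) ^ s) * (∫ t in c..d, (t - m) ^ 2 * (d - t) ^ s)
        + (|f'' d| / (d - c) ^ s) * (∫ t in c..d, (t - m) ^ 2 * (t - c) ^ s) := by
    rw [intervalIntegral.integral_add hcont_w1.intervalIntegrable hcont_w2.intervalIntegrable,
      ← intervalIntegral.integral_const_mul, ← intervalIntegral.integral_const_mul]
    congr 1 <;> (congr 1; ext t; ring)
  have e1 : (d - c) ^ (s + 1) = (d - c) ^ s * (d - c) := by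
    rw [Real.rpow_add hdc, Real.rpow_one]
  have e2 : (d - c) ^ (s + 2) = (d - c) ^ s * (d - c) ^ (2:ℕ) := by
    rw [Real.rpow_add hdc, show ((2:ℝ)) = ((2:ℕ):ℝ) by norm_num, Real.rpow_natCast]
  have e3 : (d - c) ^ (s + 3) = (d - c) ^ s * (d - c) ^ (3:ℕ) := by
    rw [Real.rpow_add hdc, show ((3:ℝ)) = ((3:ℕ):ℝ) by norm_num, Real.rpow_natCast]
  rw [integ_L1 c d m s hcd hs, integ_L2 c d m s hcd hs, e1, e2, e3] at split
  calc |∫ t in c..d, (t - m) ^ 2 * f'' t| ≤ _ := step1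
    _ ≤ _ := step3
    _ = _ := split
    _ = _ := by field_simp

lemma parts_lemma (a b : ℝ) (hab : a ≤ b) (f f' f'' : ℝ → ℝ)
    (hf' : ∀ t ∈ Set.Icc a b, HasDerivAt f (f' t) t)
    (hf'' : ∀ t ∈ Set.Icc a b, HasDerivAt f' (f'' t) t)
    (hint : IntervalIntegrable f'' volume a b)
    (A B C c d : ℝ) (hsub : Set.uIcc c d ⊆ Set.Icc a b) :
    ∫ t in c..d, (A * t ^ 2 + B * t + C) * f'' t
      = (A * d ^ 2 + B * d + C) * f' d - (A * c ^ 2 + B * c + C) * f' c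
        - ((2 * A * d + B) * f d - (2 * A * c + B) * f c
        - 2 * A * ∫ t in c..d, f t) := by
  have hsub' : Set.uIcc c d ⊆ Set.uIcc a b := by
    rwa [Set.uIcc_of_le hab]
  have hcf : ContinuousOn f (Set.uIcc c d) :=
    fun t ht => ((hf' t (hsub ht)).continuousAt).continuousWithinAt
  have hcf' : ContinuousOn f' (Set.uIcc c d) :=
    fun t ht => ((hf'' t (hsub ht)).continuousAt).continuousWithinAt
  have hintcd : IntervalIntegrable f'' volume c d := hint.mono_set hsub'
  have ibp1 : ∫ t in c..d, (A * t ^ 2 + B * t + C) * f'' t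
      = (A * d ^ 2 + B * d + C) * f' d - (A * c ^ 2 + B * c + C) * f' c
        - ∫ t in c..d, (2 * A * t + B) * f' t := by
    apply intervalIntegral.integral_mul_deriv_eq_deriv_mul
      (u := fun t => A * t ^ 2 + B * t + C) (u' := fun t => 2 * A * t + B)
      (v := f') (v' := f'')
    · intro t _
      have : HasDerivAt (fun t : ℝ => A * t ^ 2 + B * t + C) (A * (2 * t) + B) t := by
        exact (((hasDerivAt_pow 2 t).const_mul A).add ((hasDerivAt_id t).const_mul B)).add_const C
          |>.congr_deriv (by push_cast; ring)
      exact this.congr_deriv (by ring)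
    · intro t ht; exact hf'' t (hsub ht)
    · exact (Continuous.continuousOn (by fun_prop)).intervalIntegrable
    · exact hintcd
  have ibp2 : ∫ t in c..d, (2 * A * t + B) * f' t
      = (2 * A * d + B) * f d - (2 * A * c + B) * f c - ∫ t in c..d, 2 * A * f t := by
    apply intervalIntegral.integral_mul_deriv_eq_deriv_mul
      (u := fun t => 2 * A * t + B) (u' := fun t => 2 * A)
      (v := f) (v' := f')
    · intro t _
      exact (((hasDerivAt_id t).const_mul (2*A)).add_const B).congr_deriv (by ring)
    · intro t ht; exact hf' t (hsub ht)
    · exact (Continuous.continuousOn (by fun_prop)).intervalIntegrable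
    · exact hcf'.intervalIntegrable
  rw [ibp1, ibp2, intervalIntegral.integral_const_mul]

set_option maxHeartbeats 2000000 in
theorem stmt1 (a b : ℝ) (ha : 0 ≤ a) (hab : a < b) (f f' f'' : ℝ → ℝ)
    (hf' : ∀ t ∈ Set.Icc a b, HasDerivAt f (f' t) t)
    (hf'' : ∀ t ∈ Set.Icc a b, HasDerivAt f' (f'' t) t)
    (hint : IntervalIntegrable f'' volume a b)
    (s : ℝ) (hs0 : 0 < s) (hs1 : s ≤ 1)
    (hconv : SConvexOn s (Set.Icc a b) (fun t => |f'' t|)) :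
    ∀ x ∈ Set.Icc a ((a + b) / 2),
      |((1 / (b - a)) * ∫ t in a..b, f t) - (1 / 2) * (f x + f (a + b - x))
          + (1 / 2) * (x - (3 * a + b) / 4) * (f' x - f' (a + b - x))|
        ≤ (x - a) ^ 3 / ((s + 1) * (s + 2) * (s + 3) * (b - a)) * (|f'' a| + |f'' b|)
          + (4 * (s ^ 2 + 3 * s + 2) * (x - a) ^ 3 + (s ^ 2 + s + 2) * (a + b - 2 * x) ^ 3)
              / (8 * (s + 1) * (s + 2) * (s + 3) * (b - a)) * (|f'' x| + |f'' (a + b - x)|) := by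
  intro x hx
  obtain ⟨hax, hxm⟩ := hx
  set y := a + b - x with hy
  have hba : (0:ℝ) < b - a := by linarith
  have hxy : x ≤ y := by simp only [hy]; linarith
  have hyb : y ≤ b := by simp only [hy]; linarith
  have hsp1 : (0:ℝ) < s + 1 := by linarith
  have hsp2 : (0:ℝ) < s + 2 := by linarith
  have hsp3 : (0:ℝ) < s + 3 := by linarith
  -- subinterval inclusions
  have sub1 : Set.uIcc a x ⊆ Set.Icc a b := by
    rw [Set.uIcc_of_le hax]; exact Set.Icc_subset_Icc le_rfl (by linarith)
  have sub2 : Set.uIcc x y ⊆ Set.Icc a b := by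
    rw [Set.uIcc_of_le hxy]; exact Set.Icc_subset_Icc hax hyb
  have sub3 : Set.uIcc y b ⊆ Set.Icc a b := by
    rw [Set.uIcc_of_le hyb]; exact Set.Icc_subset_Icc (by simp only [hy]; linarith) le_rfl
  -- the three parts identities (with (t-m)^2 kernels)
  have rw1 : ∀ m : ℝ, ∀ c d : ℝ, (∫ t in c..d, (t - m) ^ 2 * f'' t)
      = ∫ t in c..d, (1 * t ^ 2 + (-2 * m) * t + m ^ 2) * f'' t := by
    intro m c d; congr 1; ext t; ring
  have hI1 := parts_lemma a b hab.le f f' f'' hf' hf'' hint 1 (-2*a) (a^2) a x sub1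
  have hI2 := parts_lemma a b hab.le f f' f'' hf' hf'' hint 1 (-2*((a+b)/2)) (((a+b)/2)^2) x y sub2
  have hI3 := parts_lemma a b hab.le f f' f'' hf' hf'' hint 1 (-2*b) (b^2) y b sub3
  rw [← rw1 a a x] at hI1
  rw [← rw1 ((a+b)/2) x y] at hI2
  rw [← rw1 b y b] at hI3
  -- integral additivity for f
  have hcf : ContinuousOn f (Set.Icc a b) :=
    fun t ht => ((hf' t ht).continuousAt).continuousWithinAt
  have hfint : ∀ c d : ℝ, Set.uIcc c d ⊆ Set.Icc a b → IntervalIntegrable f volume c d :=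
    fun c d h => (hcf.mono h).intervalIntegrable
  have subay : Set.uIcc a y ⊆ Set.Icc a b := by
    rw [Set.uIcc_of_le (hax.trans hxy)]
    exact Set.Icc_subset_Icc le_rfl hyb
  have hadd : (∫ t in a..x, f t) + (∫ t in x..y, f t) + (∫ t in y..b, f t)
      = ∫ t in a..b, f t := by
    rw [intervalIntegral.integral_add_adjacent_intervals (hfint a x sub1) (hfint x y sub2),
      intervalIntegral.integral_add_adjacent_intervals (hfint a y subay) (hfint y b sub3)]
  -- the identity
  have identity : ((1 / (b - a)) * ∫ t in a..b, f t) - (1 / 2) * (f x + f y)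
          + (1 / 2) * (x - (3 * a + b) / 4) * (f' x - f' y)
      = ((∫ t in a..x, (t - a) ^ 2 * f'' t) + (∫ t in x..y, (t - (a+b)/2) ^ 2 * f'' t)
          + (∫ t in y..b, (t - b) ^ 2 * f'' t)) / (2 * (b - a)) := by
    rw [hI1, hI2, hI3, ← hadd, hy]
    field_simp
    ring
  rw [identity]
  -- piece bounds
  have B1 := piece_bound a b f'' hint s hs0 hconv a x a le_rfl hax (by linarith)
  have B2 := piece_bound a b f'' hint s hs0 hconv x y ((a+b)/2) hax hxy hyb
  have B3 := piece_bound a b f'' hint s hs0 hconv y b b (by simp only [hy]; linarith) hyb le_rfl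
  have habs : |((∫ t in a..x, (t - a) ^ 2 * f'' t) + (∫ t in x..y, (t - (a+b)/2) ^ 2 * f'' t)
          + (∫ t in y..b, (t - b) ^ 2 * f'' t)) / (2 * (b - a))|
      ≤ (|∫ t in a..x, (t - a) ^ 2 * f'' t| + |∫ t in x..y, (t - (a+b)/2) ^ 2 * f'' t|
          + |∫ t in y..b, (t - b) ^ 2 * f'' t|) / (2 * (b - a)) := by
    rw [abs_div, abs_of_pos (by linarith : (0:ℝ) < 2 * (b - a))]
    apply div_le_div_of_nonneg_right _ (by linarith)
    exact (abs_add_le _ _).trans (add_le_add_left (abs_add_le _ _) _)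
  refine habs.trans ?_
  rw [div_le_iff₀ (by linarith : (0:ℝ) < 2 * (b - a))]
  have E : (((a - a) ^ 2 * (x - a) / (s + 1) + 2 * (a - a) * (x - a) ^ 2 / ((s + 1) * (s + 2))
            + 2 * (x - a) ^ 3 / ((s + 1) * (s + 2) * (s + 3))) * |f'' a|
        + ((x - a) ^ 2 * (x - a) / (s + 1) - 2 * (x - a) * (x - a) ^ 2 / ((s + 1) * (s + 2))
            + 2 * (x - a) ^ 3 / ((s + 1) * (s + 2) * (s + 3))) * |f'' x|)
      + (((x - (a+b)/2) ^ 2 * (y - x) / (s + 1) + 2 * (x - (a+b)/2) * (y - x) ^ 2 / ((s + 1) * (s + 2))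
            + 2 * (y - x) ^ 3 / ((s + 1) * (s + 2) * (s + 3))) * |f'' x|
        + ((y - (a+b)/2) ^ 2 * (y - x) / (s + 1) - 2 * (y - (a+b)/2) * (y - x) ^ 2 / ((s + 1) * (s + 2))
            + 2 * (y - x) ^ 3 / ((s + 1) * (s + 2) * (s + 3))) * |f'' y|)
      + (((y - b) ^ 2 * (b - y) / (s + 1) + 2 * (y - b) * (b - y) ^ 2 / ((s + 1) * (s + 2))
            + 2 * (b - y) ^ 3 / ((s + 1) * (s + 2) * (s + 3))) * |f'' y|
        + ((b - b) ^ 2 * (b - y) / (s + 1) - 2 * (b - b) * (b - y) ^ 2 / ((s + 1) * (s + 2))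
            + 2 * (b - y) ^ 3 / ((s + 1) * (s + 2) * (s + 3))) * |f'' b|)
      = ((x - a) ^ 3 / ((s + 1) * (s + 2) * (s + 3) * (b - a)) * (|f'' a| + |f'' b|)
          + (4 * (s ^ 2 + 3 * s + 2) * (x - a) ^ 3 + (s ^ 2 + s + 2) * (a + b - 2 * x) ^ 3)
              / (8 * (s + 1) * (s + 2) * (s + 3) * (b - a)) * (|f'' x| + |f'' y|))
        * (2 * (b - a)) := by
    rw [hy]
    generalize |f'' a| = A
    generalize |f'' b| = B
    generalize |f'' x| = X
    generalize |f'' (a + b - x)| = Y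
    field_simp
    ring
  linarith [B1, B2, B3]
end

section
/- Let f : [a,b] → ℝ (a < b) be such that f′ is absolutely continuous on [a,b], f″ ∈ L¹[a,b], and |f″| is s-convex in the second sense on [a,b] for some fixed s ∈ (0,1]. If x ∈ [a, (a+b)/2] satisfies f′(x) = f′(a+b−x), then |(1/(b−a))∫_a^b f(t) dt − (1/2)[f(x)+f(a+b−x)]| ≤ ((x−a)³/((s+1)(s+2)(s+3)(b−a)))[|f″(a)| + |f″(b)|] + ((4(s²+3s+2)(x−a)³ + (s²+s+2)(a+b−2x)³)/(8(s+1)(s+2)(s+3)(b−a)))[|f″(x)| + |f″(a+b−x)|]. -/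
open MeasureTheory

lemma core_int (e r w : ℝ) (he : 0 < e) (hr : 0 < r) :
    ∫ u in (0:ℝ)..e, (u - w)^2/2 * (u/e)^r
      = (w^2*e/(r+1) - 2*w*e^2/(r+2) + e^3/(r+3))/2 := by
  have her : (0:ℝ) < e ^ r := Real.rpow_pos_of_pos he r
  have hcongr : Set.EqOn (fun u => (u - w)^2/2 * (u/e)^r)
      (fun u => (w^2 * u^r - 2*w*u^(r+1) + u^(r+2))/(2*e^r)) (Set.uIcc 0 e) := by
    intro u hu
    rw [Set.uIcc_of_le he.le] at hu
    obtain ⟨hu0, -⟩ := hu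
    rcases hu0.eq_or_lt with h0 | h0
    · simp only [← h0]
      simp [Real.zero_rpow hr.ne', Real.zero_rpow (show r+1 ≠ 0 by positivity),
        Real.zero_rpow (show r+2 ≠ 0 by positivity)]
    · have h1 : u^(r+1) = u^r * u := by rw [Real.rpow_add h0, Real.rpow_one]
      have h2 : u^(r+2) = u^r * u^2 := by rw [Real.rpow_add h0, Real.rpow_two]
      simp only
      rw [Real.div_rpow hu0 he.le, h1, h2]
      field_simp
      ring
  rw [intervalIntegral.integral_congr hcongr]
  have i1 : IntervalIntegrable (fun u : ℝ => u^r) volume 0 e :=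
    intervalIntegral.intervalIntegrable_rpow' (by linarith)
  have i2 : IntervalIntegrable (fun u : ℝ => u^(r+1)) volume 0 e :=
    intervalIntegral.intervalIntegrable_rpow' (by linarith)
  have i3 : IntervalIntegrable (fun u : ℝ => u^(r+2)) volume 0 e :=
    intervalIntegral.intervalIntegrable_rpow' (by linarith)
  rw [intervalIntegral.integral_div]
  rw [intervalIntegral.integral_add ((i1.const_mul (w^2)).sub (i2.const_mul (2*w))) i3,
    intervalIntegral.integral_sub (i1.const_mul (w^2)) (i2.const_mul (2*w)),
    intervalIntegral.integral_const_mul, intervalIntegral.integral_const_mul,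
    integral_rpow (Or.inl (by linarith)), integral_rpow (Or.inl (by linarith)),
    integral_rpow (Or.inl (by linarith))]
  rw [Real.zero_rpow (by linarith), Real.zero_rpow (by linarith), Real.zero_rpow (by linarith)]
  have h1 : e^(r+1) = e^r * e := by rw [Real.rpow_add he, Real.rpow_one]
  have h2 : e^(r+1+1) = e^r * e^2 := by
    rw [show r+1+1 = r+2 by ring, Real.rpow_add he, Real.rpow_two]
  have h3 : e^(r+2+1) = e^r * e^3 := by
    rw [show r+2+1 = r+3 by ring, Real.rpow_add he,
      show (3:ℝ) = ((3:ℕ):ℝ) by norm_num, Real.rpow_natCast]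
  rw [h1, h2, h3]
  field_simp
  ring

lemma est_gen (c d v r P Q : ℝ) (hcd : c < d) (hr : 0 < r) (g : ℝ → ℝ)
    (hg : IntervalIntegrable g volume c d)
    (hb : ∀ t ∈ Set.Icc c d, |g t| ≤ ((d-t)/(d-c))^r * P + ((t-c)/(d-c))^r * Q) :
    |∫ t in c..d, (t-v)^2/2 * g t|
      ≤ (((d-v)^2*(d-c)/(r+1) - 2*(d-v)*(d-c)^2/(r+2) + (d-c)^3/(r+3))/2) * P
        + (((v-c)^2*(d-c)/(r+1) - 2*(v-c)*(d-c)^2/(r+2) + (d-c)^3/(r+3))/2) * Q := by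
  have he : (0:ℝ) < d - c := by linarith
  have hw1cont : ContinuousOn (fun t : ℝ => ((d-t)/(d-c))^r) (Set.uIcc c d) :=
    (((continuousOn_const.sub continuousOn_id).div_const (d-c)).rpow_const
      (fun x _ => Or.inr hr.le))
  have hw2cont : ContinuousOn (fun t : ℝ => ((t-c)/(d-c))^r) (Set.uIcc c d) :=
    (((continuousOn_id.sub continuousOn_const).div_const (d-c)).rpow_const
      (fun x _ => Or.inr hr.le))
  have hkcont : ContinuousOn (fun t : ℝ => (t-v)^2/2) (Set.uIcc c d) :=
    (((continuousOn_id.sub continuousOn_const).pow 2).div_const 2)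
  have eq1 : ∫ t in c..d, (t-v)^2/2 * ((d-t)/(d-c))^r
      = ((d-v)^2*(d-c)/(r+1) - 2*(d-v)*(d-c)^2/(r+2) + (d-c)^3/(r+3))/2 := by
    have : ∫ t in c..d, (t-v)^2/2 * ((d-t)/(d-c))^r
        = ∫ t in c..d, (fun u => (u-(d-v))^2/2*(u/(d-c))^r) (d - t) := by
      apply intervalIntegral.integral_congr
      intro t _
      simp only
      ring_nf
    rw [this, intervalIntegral.integral_comp_sub_left (fun u => (u-(d-v))^2/2*(u/(d-c))^r) d,
      sub_self]
    exact core_int (d-c) r (d-v) he hr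
  have eq2 : ∫ t in c..d, (t-v)^2/2 * ((t-c)/(d-c))^r
      = ((v-c)^2*(d-c)/(r+1) - 2*(v-c)*(d-c)^2/(r+2) + (d-c)^3/(r+3))/2 := by
    have : ∫ t in c..d, (t-v)^2/2 * ((t-c)/(d-c))^r
        = ∫ t in c..d, (fun u => (u-(v-c))^2/2*(u/(d-c))^r) (t - c) := by
      apply intervalIntegral.integral_congr
      intro t _
      simp only
      ring_nf
    rw [this, intervalIntegral.integral_comp_sub_right (fun u => (u-(v-c))^2/2*(u/(d-c))^r) c,
      sub_self]
    exact core_int (d-c) r (v-c) he hr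
  calc |∫ t in c..d, (t-v)^2/2 * g t|
      ≤ ∫ t in c..d, |(t-v)^2/2 * g t| := by
        exact intervalIntegral.abs_integral_le_integral_abs hcd.le
    _ ≤ ∫ t in c..d, (t-v)^2/2 * (((d-t)/(d-c))^r * P + ((t-c)/(d-c))^r * Q) := by
        apply intervalIntegral.integral_mono_on hcd.le
        · exact (hg.continuousOn_mul hkcont).abs
        · exact (hkcont.mul ((hw1cont.mul continuousOn_const).add
            (hw2cont.mul continuousOn_const))).intervalIntegrable
        · intro t ht
          rw [abs_mul, abs_of_nonneg (by positivity : (0:ℝ) ≤ (t-v)^2/2)]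
          exact mul_le_mul_of_nonneg_left (hb t ht) (by positivity)
    _ = (((d-v)^2*(d-c)/(r+1) - 2*(d-v)*(d-c)^2/(r+2) + (d-c)^3/(r+3))/2) * P
        + (((v-c)^2*(d-c)/(r+1) - 2*(v-c)*(d-c)^2/(r+2) + (d-c)^3/(r+3))/2) * Q := by
        have : (fun t => (t-v)^2/2 * (((d-t)/(d-c))^r * P + ((t-c)/(d-c))^r * Q))
            = fun t => ((t-v)^2/2 * ((d-t)/(d-c))^r) * P + ((t-v)^2/2 * ((t-c)/(d-c))^r) * Q := by
          funext t; ring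
        rw [this, intervalIntegral.integral_add (f := fun t => (t-v)^2/2 * ((d-t)/(d-c))^r * P)
            (g := fun t => (t-v)^2/2 * ((t-c)/(d-c))^r * Q)
            (((hkcont.mul hw1cont).intervalIntegrable).mul_const P)
            (((hkcont.mul hw2cont).intervalIntegrable).mul_const Q),
          intervalIntegral.integral_mul_const, intervalIntegral.integral_mul_const, eq1, eq2]

lemma fund (a b : ℝ) (f f' f'' : ℝ → ℝ)
    (hf' : ∀ t ∈ Set.Icc a b, HasDerivAt f (f' t) t)
    (hf'' : ∀ t ∈ Set.Icc a b, HasDerivAt f' (f'' t) t)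
    (hint : IntervalIntegrable f'' volume a b)
    (c d v : ℝ) (hc : a ≤ c) (hcd : c ≤ d) (hd : d ≤ b) :
    ∫ t in c..d, ((t-v)^2/2 * f'' t - f t)
      = ((d-v)^2/2 * f' d - (d-v) * f d) - ((c-v)^2/2 * f' c - (c-v) * f c) := by
  have hab : a ≤ b := hc.trans (hcd.trans hd)
  have hsub : Set.uIcc c d ⊆ Set.uIcc a b := by
    rw [Set.uIcc_of_le hcd, Set.uIcc_of_le hab]
    exact Set.Icc_subset_Icc hc hd
  have hmem : ∀ t ∈ Set.uIcc c d, t ∈ Set.Icc a b := by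
    intro t ht
    rw [Set.uIcc_of_le hab] at hsub
    exact hsub ht
  have hkcont : ContinuousOn (fun t : ℝ => (t-v)^2/2) (Set.uIcc c d) :=
    (((continuousOn_id.sub continuousOn_const).pow 2).div_const 2)
  apply intervalIntegral.integral_eq_sub_of_hasDerivAt
  · intro t ht
    have htab : t ∈ Set.Icc a b := hmem t ht
    have hq : HasDerivAt (fun t : ℝ => (t-v)^2/2) (t-v) t := by
      have h := (((hasDerivAt_id t).sub_const v).pow 2).div_const 2
      exact h.congr_deriv (by simp only [id_eq]; push_cast; ring)
    have h1 : HasDerivAt (fun t => (t-v)^2/2 * f' t) ((t-v) * f' t + (t-v)^2/2 * f'' t) t :=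
      hq.mul (hf'' t htab)
    have h2 : HasDerivAt (fun t => (t-v) * f t) (1 * f t + (t-v) * f' t) t :=
      ((hasDerivAt_id t).sub_const v).mul (hf' t htab)
    have h3 := h1.sub h2
    exact h3.congr_deriv (by ring)
  · apply IntervalIntegrable.sub
    · exact (hint.mono_set hsub).continuousOn_mul hkcont
    · have hfc : ContinuousOn f (Set.uIcc c d) :=
        fun t ht => (hf' t (hmem t ht)).continuousAt.continuousWithinAt
      exact hfc.intervalIntegrable

set_option maxHeartbeats 1000000 in
theorem stmt2 (a b : ℝ) (ha : 0 ≤ a) (hab : a < b) (f f' f'' : ℝ → ℝ)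
    (hf' : ∀ t ∈ Set.Icc a b, HasDerivAt f (f' t) t)
    (hf'' : ∀ t ∈ Set.Icc a b, HasDerivAt f' (f'' t) t)
    (hint : IntervalIntegrable f'' volume a b)
    (s : ℝ) (hs0 : 0 < s) (hs1 : s ≤ 1)
    (hconv : SConvexOn s (Set.Icc a b) (fun t => |f'' t|)) :
    ∀ x ∈ Set.Icc a ((a + b) / 2), f' x = f' (a + b - x) →
      |((1 / (b - a)) * ∫ t in a..b, f t) - (1 / 2) * (f x + f (a + b - x))|
        ≤ (x - a) ^ 3 / ((s + 1) * (s + 2) * (s + 3) * (b - a)) * (|f'' a| + |f'' b|)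
          + (4 * (s ^ 2 + 3 * s + 2) * (x - a) ^ 3 + (s ^ 2 + s + 2) * (a + b - 2 * x) ^ 3)
              / (8 * (s + 1) * (s + 2) * (s + 3) * (b - a)) * (|f'' x| + |f'' (a + b - x)|) := by
  intro x hx hfx
  obtain ⟨hax, hxm⟩ := hx
  have hab' : a ≤ b := hab.le
  have hba : (0:ℝ) < b - a := by linarith
  have hxy : x ≤ a + b - x := by linarith
  have hyb : a + b - x ≤ b := by linarith
  have hay : a ≤ a + b - x := by linarith
  have hxb : x ≤ b := by linarith
  have hxI : x ∈ Set.Icc a b := ⟨hax, hxb⟩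
  have hyI : a + b - x ∈ Set.Icc a b := ⟨hay, hyb⟩
  have haI : a ∈ Set.Icc a b := ⟨le_rfl, hab'⟩
  have hbI : b ∈ Set.Icc a b := ⟨hab', le_rfl⟩
  have hs1' : s + 1 ≠ 0 := by positivity
  have hs2' : s + 2 ≠ 0 := by positivity
  have hs3' : s + 3 ≠ 0 := by positivity
  -- continuity and integrability of f
  have hfc : ContinuousOn f (Set.uIcc a b) := by
    rw [Set.uIcc_of_le hab']
    exact fun t ht => (hf' t ht).continuousAt.continuousWithinAt
  have hfint : IntervalIntegrable f volume a b := hfc.intervalIntegrable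
  have hsub1 : Set.uIcc a x ⊆ Set.uIcc a b := by
    rw [Set.uIcc_of_le hax, Set.uIcc_of_le hab']; exact Set.Icc_subset_Icc le_rfl hxb
  have hsub2 : Set.uIcc x (a+b-x) ⊆ Set.uIcc a b := by
    rw [Set.uIcc_of_le hxy, Set.uIcc_of_le hab']; exact Set.Icc_subset_Icc hax hyb
  have hsub3 : Set.uIcc (a+b-x) b ⊆ Set.uIcc a b := by
    rw [Set.uIcc_of_le hyb, Set.uIcc_of_le hab']; exact Set.Icc_subset_Icc hay le_rfl
  have hk1c : ContinuousOn (fun t : ℝ => (t-a)^2/2) (Set.uIcc a x) :=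
    ((continuousOn_id.sub continuousOn_const).pow 2).div_const 2
  have hk2c : ContinuousOn (fun t : ℝ => (t-(a+b)/2)^2/2) (Set.uIcc x (a+b-x)) :=
    ((continuousOn_id.sub continuousOn_const).pow 2).div_const 2
  have hk3c : ContinuousOn (fun t : ℝ => (t-b)^2/2) (Set.uIcc (a+b-x) b) :=
    ((continuousOn_id.sub continuousOn_const).pow 2).div_const 2
  have hi1 : IntervalIntegrable (fun t => (t-a)^2/2 * f'' t) volume a x :=
    (hint.mono_set hsub1).continuousOn_mul hk1c
  have hi2 : IntervalIntegrable (fun t => (t-(a+b)/2)^2/2 * f'' t) volume x (a+b-x) :=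
    (hint.mono_set hsub2).continuousOn_mul hk2c
  have hi3 : IntervalIntegrable (fun t => (t-b)^2/2 * f'' t) volume (a+b-x) b :=
    (hint.mono_set hsub3).continuousOn_mul hk3c
  have hfi1 : IntervalIntegrable f volume a x := hfint.mono_set hsub1
  have hfi2 : IntervalIntegrable f volume x (a+b-x) := hfint.mono_set hsub2
  have hfi3 : IntervalIntegrable f volume (a+b-x) b := hfint.mono_set hsub3
  -- integration by parts on the three pieces
  have s1 : (∫ t in a..x, (t-a)^2/2 * f'' t)
      = (∫ t in a..x, f t) + (((x-a)^2/2 * f' x - (x-a) * f x)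
          - ((a-a)^2/2 * f' a - (a-a) * f a)) := by
    have h1 := fund a b f f' f'' hf' hf'' hint a x a le_rfl hax hxb
    rw [intervalIntegral.integral_sub hi1 hfi1] at h1
    linarith
  have s2 : (∫ t in x..(a+b-x), (t-(a+b)/2)^2/2 * f'' t)
      = (∫ t in x..(a+b-x), f t)
        + ((((a+b-x)-(a+b)/2)^2/2 * f' (a+b-x) - ((a+b-x)-(a+b)/2) * f (a+b-x))
          - ((x-(a+b)/2)^2/2 * f' x - (x-(a+b)/2) * f x)) := by
    have h2 := fund a b f f' f'' hf' hf'' hint x (a+b-x) ((a+b)/2) hax hxy hyb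
    rw [intervalIntegral.integral_sub hi2 hfi2] at h2
    linarith
  have s3 : (∫ t in (a+b-x)..b, (t-b)^2/2 * f'' t)
      = (∫ t in (a+b-x)..b, f t)
        + (((b-b)^2/2 * f' b - (b-b) * f b)
          - (((a+b-x)-b)^2/2 * f' (a+b-x) - ((a+b-x)-b) * f (a+b-x))) := by
    have h3 := fund a b f f' f'' hf' hf'' hint (a+b-x) b b hay hyb le_rfl
    rw [intervalIntegral.integral_sub hi3 hfi3] at h3
    linarith
  have hadd : (∫ t in a..b, f t)
      = (∫ t in a..x, f t) + (∫ t in x..(a+b-x), f t) + (∫ t in (a+b-x)..b, f t) := by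
    rw [intervalIntegral.integral_add_adjacent_intervals hfi1 hfi2,
      intervalIntegral.integral_add_adjacent_intervals (hfi1.trans hfi2) hfi3]
  have hiden : (∫ t in a..b, f t)
      = ((∫ t in a..x, (t-a)^2/2 * f'' t) + (∫ t in x..(a+b-x), (t-(a+b)/2)^2/2 * f'' t)
          + (∫ t in (a+b-x)..b, (t-b)^2/2 * f'' t))
        + (b-a)/2 * (f x + f (a+b-x)) := by
    linear_combination hadd - s1 - s2 - s3 + ((x-(a+b)/2)^2/2 - (x-a)^2/2) * hfx
  -- bounds on the three pieces
  have B1 : |∫ t in a..x, (t-a)^2/2 * f'' t|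
      ≤ (x-a)^3/((s+1)*(s+2)*(s+3)) * |f'' a| + (x-a)^3/(2*(s+3)) * |f'' x| := by
    rcases eq_or_lt_of_le hax with h | h
    · rw [← h, intervalIntegral.integral_same]
      norm_num
    · have hb1 : ∀ t ∈ Set.Icc a x, |f'' t|
          ≤ ((x-t)/(x-a))^s * |f'' a| + ((t-a)/(x-a))^s * |f'' x| := by
        intro t ht
        have hxa : (0:ℝ) < x - a := by linarith
        have hα : 0 ≤ (x-t)/(x-a) := div_nonneg (by linarith [ht.2]) hxa.le
        have hβ : 0 ≤ (t-a)/(x-a) := div_nonneg (by linarith [ht.1]) hxa.le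
        have hαβ : (x-t)/(x-a) + (t-a)/(x-a) = 1 := by field_simp; ring
        have hc := hconv a haI x hxI _ _ hα hβ hαβ
        rw [show (x-t)/(x-a)*a + (t-a)/(x-a)*x = t by field_simp; ring] at hc
        simpa using hc
      have h1 := est_gen a x a s (|f'' a|) (|f'' x|) h hs0 f'' (hint.mono_set hsub1) hb1
      refine h1.trans_eq ?_
      field_simp
      ring
  have B2 : |∫ t in x..(a+b-x), (t-(a+b)/2)^2/2 * f'' t|
      ≤ (a+b-2*x)^3*(s^2+s+2)/(8*(s+1)*(s+2)*(s+3)) * (|f'' x| + |f'' (a+b-x)|) := by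
    rcases eq_or_lt_of_le hxy with h | h
    · have hz : a + b - 2*x = 0 := by linarith
      rw [← h, intervalIntegral.integral_same, hz]
      norm_num
    · have hb2 : ∀ t ∈ Set.Icc x (a+b-x), |f'' t|
          ≤ (((a+b-x)-t)/((a+b-x)-x))^s * |f'' x| + ((t-x)/((a+b-x)-x))^s * |f'' (a+b-x)| := by
        intro t ht
        have hxa : (0:ℝ) < (a+b-x) - x := by linarith
        have hα : 0 ≤ ((a+b-x)-t)/((a+b-x)-x) := div_nonneg (by linarith [ht.2]) hxa.le
        have hβ : 0 ≤ (t-x)/((a+b-x)-x) := div_nonneg (by linarith [ht.1]) hxa.le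
        have hαβ : ((a+b-x)-t)/((a+b-x)-x) + (t-x)/((a+b-x)-x) = 1 := by field_simp; ring
        have hc := hconv x hxI (a+b-x) hyI _ _ hα hβ hαβ
        rw [show ((a+b-x)-t)/((a+b-x)-x)*x + (t-x)/((a+b-x)-x)*(a+b-x) = t by
          field_simp; ring] at hc
        simpa using hc
      have h2 := est_gen x (a+b-x) ((a+b)/2) s (|f'' x|) (|f'' (a+b-x)|) h hs0 f''
        (hint.mono_set hsub2) hb2
      refine h2.trans_eq ?_
      field_simp
      ring
  have B3 : |∫ t in (a+b-x)..b, (t-b)^2/2 * f'' t|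
      ≤ (x-a)^3/(2*(s+3)) * |f'' (a+b-x)| + (x-a)^3/((s+1)*(s+2)*(s+3)) * |f'' b| := by
    rcases eq_or_lt_of_le hyb with h | h
    · have hxa : x = a := by linarith
      rw [h, intervalIntegral.integral_same, hxa]
      norm_num
    · have hyb' : a + b - x < b := h
      have hb3 : ∀ t ∈ Set.Icc (a+b-x) b, |f'' t|
          ≤ ((b-t)/(b-(a+b-x)))^s * |f'' (a+b-x)| + ((t-(a+b-x))/(b-(a+b-x)))^s * |f'' b| := by
        intro t ht
        have hxa : (0:ℝ) < b - (a+b-x) := by linarith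
        have hα : 0 ≤ (b-t)/(b-(a+b-x)) := div_nonneg (by linarith [ht.2]) hxa.le
        have hβ : 0 ≤ (t-(a+b-x))/(b-(a+b-x)) := div_nonneg (by linarith [ht.1]) hxa.le
        have hαβ : (b-t)/(b-(a+b-x)) + (t-(a+b-x))/(b-(a+b-x)) = 1 := by field_simp; ring
        have hc := hconv (a+b-x) hyI b hbI _ _ hα hβ hαβ
        rw [show (b-t)/(b-(a+b-x))*(a+b-x) + (t-(a+b-x))/(b-(a+b-x))*b = t by
          field_simp; ring] at hc
        simpa using hc
      have h3 := est_gen (a+b-x) b b s (|f'' (a+b-x)|) (|f'' b|) hyb' hs0 f''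
        (hint.mono_set hsub3) hb3
      refine h3.trans_eq ?_
      have hxa : b - (a+b-x) = x - a := by ring
      field_simp
      ring
  -- assemble
  have hrw : (1 / (b - a)) * (∫ t in a..b, f t) - (1 / 2) * (f x + f (a + b - x))
      = ((∫ t in a..x, (t-a)^2/2 * f'' t) + (∫ t in x..(a+b-x), (t-(a+b)/2)^2/2 * f'' t)
          + (∫ t in (a+b-x)..b, (t-b)^2/2 * f'' t)) / (b - a) := by
    rw [hiden]
    field_simp
    ring
  rw [hrw, abs_div, abs_of_pos hba, div_le_iff₀ hba]
  calc |(∫ t in a..x, (t-a)^2/2 * f'' t) + (∫ t in x..(a+b-x), (t-(a+b)/2)^2/2 * f'' t)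
          + (∫ t in (a+b-x)..b, (t-b)^2/2 * f'' t)|
      ≤ |∫ t in a..x, (t-a)^2/2 * f'' t| + |∫ t in x..(a+b-x), (t-(a+b)/2)^2/2 * f'' t|
          + |∫ t in (a+b-x)..b, (t-b)^2/2 * f'' t| := by
        exact (abs_add_le _ _).trans (add_le_add_left (abs_add_le _ _) _)
    _ ≤ ((x-a)^3/((s+1)*(s+2)*(s+3)) * |f'' a| + (x-a)^3/(2*(s+3)) * |f'' x|)
        + ((a+b-2*x)^3*(s^2+s+2)/(8*(s+1)*(s+2)*(s+3)) * (|f'' x| + |f'' (a+b-x)|))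
        + ((x-a)^3/(2*(s+3)) * |f'' (a+b-x)| + (x-a)^3/((s+1)*(s+2)*(s+3)) * |f'' b|) :=
        add_le_add (add_le_add B1 B2) B3
    _ = ((x - a) ^ 3 / ((s + 1) * (s + 2) * (s + 3) * (b - a)) * (|f'' a| + |f'' b|)
          + (4 * (s ^ 2 + 3 * s + 2) * (x - a) ^ 3 + (s ^ 2 + s + 2) * (a + b - 2 * x) ^ 3)
              / (8 * (s + 1) * (s + 2) * (s + 3) * (b - a)) * (|f'' x| + |f'' (a + b - x)|))
        * (b - a) := by
        field_simp
        ring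
end

section
/- Let f : [a,b] → ℝ (a < b) be such that f′ is absolutely continuous on [a,b], f″ ∈ L¹[a,b], and |f″| is s-convex in the second sense on [a,b] for some fixed s ∈ (0,1]. Then |(1/(b−a))∫_a^b f(t) dt − f((a+b)/2)| ≤ ((b−a)²/(8(s+1)(s+2)(s+3)))[|f″(a)| + (s²+3s+2)|f″((a+b)/2)| + |f″(b)|]. -/
open MeasureTheory

open intervalIntegral



lemma int_pow_right (p c d : ℝ) (hp : 0 ≤ p) :
    ∫ t in c..d, (t - c) ^ p = (d - c) ^ (p + 1) / (p + 1) := by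
  rw [intervalIntegral.integral_comp_sub_right (fun x => x ^ p) c]
  rw [integral_rpow (Or.inl (by linarith))]
  rw [sub_self, Real.zero_rpow (by linarith), sub_zero]

lemma int_pow_left (p c d : ℝ) (hp : 0 ≤ p) :
    ∫ t in c..d, (d - t) ^ p = (d - c) ^ (p + 1) / (p + 1) := by
  rw [intervalIntegral.integral_comp_sub_left (fun x => x ^ p) d]
  rw [integral_rpow (Or.inl (by linarith))]
  rw [sub_self, Real.zero_rpow (by linarith), sub_zero]

lemma pow2_mul_rpow (x s : ℝ) (hx : 0 ≤ x) (hs : 0 < s) :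
    x ^ 2 * x ^ s = x ^ (s + 2) := by
  rw [← Real.rpow_natCast x 2, ← Real.rpow_add_of_nonneg hx (by norm_num) hs.le]
  norm_num [add_comm]

lemma intg_J2 (s c d : ℝ) (hs : 0 < s) (hcd : c ≤ d) :
    ∫ t in c..d, (t - c) ^ 2 * (t - c) ^ s = (d - c) ^ (s + 3) / (s + 3) := by
  have : ∫ t in c..d, (t - c) ^ 2 * (t - c) ^ s = ∫ t in c..d, (t - c) ^ (s + 2) := by
    apply intervalIntegral.integral_congr
    intro t ht
    rw [Set.uIcc_of_le hcd] at ht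
    exact pow2_mul_rpow _ _ (by linarith [ht.1]) hs
  rw [this, int_pow_right (s + 2) c d (by linarith)]
  norm_num
  ring_nf

lemma intg_J2' (s c d : ℝ) (hs : 0 < s) (hcd : c ≤ d) :
    ∫ t in c..d, (d - t) ^ 2 * (d - t) ^ s = (d - c) ^ (s + 3) / (s + 3) := by
  have : ∫ t in c..d, (d - t) ^ 2 * (d - t) ^ s = ∫ t in c..d, (d - t) ^ (s + 2) := by
    apply intervalIntegral.integral_congr
    intro t ht
    rw [Set.uIcc_of_le hcd] at ht
    exact pow2_mul_rpow _ _ (by linarith [ht.2]) hs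
  rw [this, int_pow_left (s + 2) c d (by linarith)]
  norm_num
  ring_nf

lemma cont_rpow_shift (s e : ℝ) (hs : 0 < s) :
    Continuous (fun t : ℝ => (e - t) ^ s) := by
  have h : ∀ t : ℝ, ContinuousAt (fun t : ℝ => (e - t) ^ s) t := by
    intro t
    exact (Real.continuousAt_rpow_const _ _ (Or.inr hs.le)).comp
      ((continuous_const.sub continuous_id).continuousAt)
  exact continuous_iff_continuousAt.mpr h

lemma cont_rpow_shift' (s e : ℝ) (hs : 0 < s) :
    Continuous (fun t : ℝ => (t - e) ^ s) := by
  have h : ∀ t : ℝ, ContinuousAt (fun t : ℝ => (t - e) ^ s) t := by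
    intro t
    exact (Real.continuousAt_rpow_const _ _ (Or.inr hs.le)).comp
      ((continuous_id.sub continuous_const).continuousAt)
  exact continuous_iff_continuousAt.mpr h

lemma intg_J1 (s c d : ℝ) (hs : 0 < s) (hcd : c ≤ d) :
    ∫ t in c..d, (t - c) ^ 2 * (d - t) ^ s
      = 2 * (d - c) ^ (s + 3) / ((s + 1) * (s + 2) * (s + 3)) := by
  have key : ∫ t in c..d, (t - c) ^ 2 * (d - t) ^ s
      = ∫ t in c..d, ((d - c) ^ 2 * (d - t) ^ s - 2 * (d - c) * ((d - t) ^ (s + 1))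
          + (d - t) ^ (s + 2)) := by
    apply intervalIntegral.integral_congr
    intro t ht
    rw [Set.uIcc_of_le hcd] at ht
    have h1 : 0 ≤ d - t := by linarith [ht.2]
    show (t - c) ^ 2 * (d - t) ^ s
      = (d - c) ^ 2 * (d - t) ^ s - 2 * (d - c) * ((d - t) ^ (s + 1)) + (d - t) ^ (s + 2)
    have e1 : (d - t) ^ (s + 1) = (d - t) ^ s * (d - t) := by
      rw [Real.rpow_add_of_nonneg h1 hs.le (by norm_num), Real.rpow_one]
    have e2 : (d - t) ^ (s + 2) = (d - t) ^ 2 * (d - t) ^ s :=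
      (pow2_mul_rpow _ _ h1 hs).symm
    rw [e1, e2]; ring
  rw [key]
  have i1 : IntervalIntegrable (fun t => (d - c) ^ 2 * (d - t) ^ s) volume c d :=
    (continuous_const.mul (cont_rpow_shift s d hs)).intervalIntegrable c d
  have i2 : IntervalIntegrable (fun t => 2 * (d - c) * ((d - t) ^ (s + 1))) volume c d :=
    (continuous_const.mul (cont_rpow_shift (s+1) d (by linarith))).intervalIntegrable c d
  have i3 : IntervalIntegrable (fun t => (d - t) ^ (s + 2)) volume c d :=
    (cont_rpow_shift (s+2) d (by linarith)).intervalIntegrable c d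
  rw [intervalIntegral.integral_add (i1.sub i2) i3, intervalIntegral.integral_sub i1 i2,
    intervalIntegral.integral_const_mul, intervalIntegral.integral_const_mul,
    int_pow_left s c d hs.le, int_pow_left (s+1) c d (by linarith),
    int_pow_left (s+2) c d (by linarith)]
  have hd : 0 ≤ d - c := by linarith
  have e1 : (d - c) ^ (s + 1 + 1) = (d - c) ^ (s+1) * (d - c) := by
    rw [Real.rpow_add_of_nonneg hd (by linarith) (by norm_num), Real.rpow_one]
  have e2 : (d - c) ^ (s + 1) = (d - c) ^ s * (d - c) := by
    rw [Real.rpow_add_of_nonneg hd hs.le (by norm_num), Real.rpow_one]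
  have e3 : (d - c) ^ (s + 2 + 1) = (d - c) ^ s * (d - c) ^ (2:ℕ) * (d - c) := by
    rw [show s + 2 + 1 = s + 3 by ring, Real.rpow_add_of_nonneg hd hs.le (by norm_num)]
    rw [show (3:ℝ) = ((3:ℕ):ℝ) by norm_num, Real.rpow_natCast]
    ring
  have e4 : (d - c) ^ (s + 3) = (d - c) ^ s * (d - c) ^ (3:ℕ) := by
    rw [Real.rpow_add_of_nonneg hd hs.le (by norm_num),
      show (3:ℝ) = ((3:ℕ):ℝ) by norm_num, Real.rpow_natCast]
  rw [e1, e2, e3, e4]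
  have h1 : s + 1 ≠ 0 := by linarith
  have h2 : s + 2 ≠ 0 := by linarith
  have h3 : s + 3 ≠ 0 := by linarith
  field_simp
  ring

lemma intg_J1' (s c d : ℝ) (hs : 0 < s) (hcd : c ≤ d) :
    ∫ t in c..d, (d - t) ^ 2 * (t - c) ^ s
      = 2 * (d - c) ^ (s + 3) / ((s + 1) * (s + 2) * (s + 3)) := by
  have := intervalIntegral.integral_comp_sub_left
    (fun x => (x - c) ^ 2 * (d - x) ^ s) (c + d) (a := c) (b := d)
  simp only [show c + d - d = c by ring, show c + d - c = d by ring] at this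
  rw [← intg_J1 s c d hs hcd, ← this]
  apply intervalIntegral.integral_congr
  intro t ht
  show (d - t) ^ 2 * (t - c) ^ s = (c + d - t - c) ^ 2 * (d - (c + d - t)) ^ s
  rw [show c + d - t - c = d - t by ring, show d - (c + d - t) = t - c by ring]


lemma cont_rpow_comp (s : ℝ) (hs : 0 < s) {g : ℝ → ℝ} (hg : Continuous g) :
    Continuous (fun t : ℝ => (g t) ^ s) := by
  apply continuous_iff_continuousAt.mpr
  intro t
  exact (Real.continuousAt_rpow_const _ _ (Or.inr hs.le)).comp hg.continuousAt

lemma half_bound (s c d : ℝ) (hs : 0 < s) (hcd : c < d) (g : ℝ → ℝ)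
    (hg : IntervalIntegrable g volume c d) (A B : ℝ)
    (hb : ∀ t ∈ Set.Icc c d, |g t| ≤ ((d - t) / (d - c)) ^ s * A + ((t - c) / (d - c)) ^ s * B) :
    |∫ t in c..d, (t - c) ^ 2 / 2 * g t|
      ≤ (d - c) ^ 3 * A / ((s + 1) * (s + 2) * (s + 3)) + (d - c) ^ 3 * B / (2 * (s + 3)) := by
  have hd : 0 < d - c := by linarith
  have hwcont : Continuous (fun t : ℝ => (t - c) ^ 2 / 2) := by continuity
  have hwg : IntervalIntegrable (fun t => (t - c) ^ 2 / 2 * g t) volume c d :=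
    hg.continuousOn_mul hwcont.continuousOn
  have hφ1 : Continuous (fun t : ℝ => ((d - t) / (d - c)) ^ s) :=
    cont_rpow_comp s hs (by continuity)
  have hφ2 : Continuous (fun t : ℝ => ((t - c) / (d - c)) ^ s) :=
    cont_rpow_comp s hs (by continuity)
  have hφcont : Continuous (fun t : ℝ =>
      (t - c) ^ 2 / 2 * (((d - t) / (d - c)) ^ s * A + ((t - c) / (d - c)) ^ s * B)) := by
    exact hwcont.mul ((hφ1.mul continuous_const).add (hφ2.mul continuous_const))
  calc |∫ t in c..d, (t - c) ^ 2 / 2 * g t|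
      ≤ ∫ t in c..d, |(t - c) ^ 2 / 2 * g t| :=
        intervalIntegral.abs_integral_le_integral_abs hcd.le
    _ ≤ ∫ t in c..d, (t - c) ^ 2 / 2 *
          (((d - t) / (d - c)) ^ s * A + ((t - c) / (d - c)) ^ s * B) := by
        apply intervalIntegral.integral_mono_on hcd.le hwg.abs
          (hφcont.intervalIntegrable c d)
        intro t ht
        rw [abs_mul, abs_of_nonneg (by positivity : (0:ℝ) ≤ (t - c) ^ 2 / 2)]
        exact mul_le_mul_of_nonneg_left (hb t ht) (by positivity)
    _ = (d - c) ^ 3 * A / ((s + 1) * (s + 2) * (s + 3)) + (d - c) ^ 3 * B / (2 * (s + 3)) := by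
        have hcongr : ∫ t in c..d, (t - c) ^ 2 / 2 *
              (((d - t) / (d - c)) ^ s * A + ((t - c) / (d - c)) ^ s * B)
            = ∫ t in c..d, (A / (2 * (d - c) ^ s) * ((t - c) ^ 2 * (d - t) ^ s)
                + B / (2 * (d - c) ^ s) * ((t - c) ^ 2 * (t - c) ^ s)) := by
          apply intervalIntegral.integral_congr
          intro t ht
          rw [Set.uIcc_of_le hcd.le] at ht
          show (t - c) ^ 2 / 2 * (((d - t) / (d - c)) ^ s * A + ((t - c) / (d - c)) ^ s * B)
            = A / (2 * (d - c) ^ s) * ((t - c) ^ 2 * (d - t) ^ s)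
              + B / (2 * (d - c) ^ s) * ((t - c) ^ 2 * (t - c) ^ s)
          rw [Real.div_rpow (by linarith [ht.2]) hd.le, Real.div_rpow (by linarith [ht.1]) hd.le]
          have : (d - c) ^ s ≠ 0 := ne_of_gt (Real.rpow_pos_of_pos hd s)
          field_simp
        rw [hcongr]
        have i1 : IntervalIntegrable
            (fun t => A / (2 * (d - c) ^ s) * ((t - c) ^ 2 * (d - t) ^ s)) volume c d := by
          apply Continuous.intervalIntegrable
          exact continuous_const.mul ((by continuity : Continuous fun t : ℝ => (t - c) ^ 2).mul
            (cont_rpow_comp s hs (by continuity)))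
        have i2 : IntervalIntegrable
            (fun t => B / (2 * (d - c) ^ s) * ((t - c) ^ 2 * (t - c) ^ s)) volume c d := by
          apply Continuous.intervalIntegrable
          exact continuous_const.mul ((by continuity : Continuous fun t : ℝ => (t - c) ^ 2).mul
            (cont_rpow_comp s hs (by continuity)))
        rw [intervalIntegral.integral_add i1 i2, intervalIntegral.integral_const_mul,
          intervalIntegral.integral_const_mul, intg_J1 s c d hs hcd.le, intg_J2 s c d hs hcd.le]
        have e4 : (d - c) ^ (s + 3) = (d - c) ^ s * (d - c) ^ (3:ℕ) := by
          rw [Real.rpow_add_of_nonneg hd.le hs.le (by norm_num),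
            show (3:ℝ) = ((3:ℕ):ℝ) by norm_num, Real.rpow_natCast]
        rw [e4]
        have h1 : s + 1 ≠ 0 := by linarith
        have h2 : s + 2 ≠ 0 := by linarith
        have h3 : s + 3 ≠ 0 := by linarith
        have hds : (d - c) ^ s ≠ 0 := ne_of_gt (Real.rpow_pos_of_pos hd s)
        field_simp


lemma half_bound' (s c d : ℝ) (hs : 0 < s) (hcd : c < d) (g : ℝ → ℝ)
    (hg : IntervalIntegrable g volume c d) (A B : ℝ)
    (hb : ∀ t ∈ Set.Icc c d, |g t| ≤ ((d - t) / (d - c)) ^ s * A + ((t - c) / (d - c)) ^ s * B) :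
    |∫ t in c..d, (d - t) ^ 2 / 2 * g t|
      ≤ (d - c) ^ 3 * A / (2 * (s + 3)) + (d - c) ^ 3 * B / ((s + 1) * (s + 2) * (s + 3)) := by
  have hd : 0 < d - c := by linarith
  have hwcont : Continuous (fun t : ℝ => (d - t) ^ 2 / 2) := by continuity
  have hwg : IntervalIntegrable (fun t => (d - t) ^ 2 / 2 * g t) volume c d :=
    hg.continuousOn_mul hwcont.continuousOn
  have hφ1 : Continuous (fun t : ℝ => ((d - t) / (d - c)) ^ s) :=
    cont_rpow_comp s hs (by continuity)
  have hφ2 : Continuous (fun t : ℝ => ((t - c) / (d - c)) ^ s) :=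
    cont_rpow_comp s hs (by continuity)
  have hφcont : Continuous (fun t : ℝ =>
      (d - t) ^ 2 / 2 * (((d - t) / (d - c)) ^ s * A + ((t - c) / (d - c)) ^ s * B)) := by
    exact hwcont.mul ((hφ1.mul continuous_const).add (hφ2.mul continuous_const))
  calc |∫ t in c..d, (d - t) ^ 2 / 2 * g t|
      ≤ ∫ t in c..d, |(d - t) ^ 2 / 2 * g t| :=
        intervalIntegral.abs_integral_le_integral_abs hcd.le
    _ ≤ ∫ t in c..d, (d - t) ^ 2 / 2 *
          (((d - t) / (d - c)) ^ s * A + ((t - c) / (d - c)) ^ s * B) := by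
        apply intervalIntegral.integral_mono_on hcd.le hwg.abs
          (hφcont.intervalIntegrable c d)
        intro t ht
        rw [abs_mul, abs_of_nonneg (by positivity : (0:ℝ) ≤ (d - t) ^ 2 / 2)]
        exact mul_le_mul_of_nonneg_left (hb t ht) (by positivity)
    _ = (d - c) ^ 3 * A / (2 * (s + 3)) + (d - c) ^ 3 * B / ((s + 1) * (s + 2) * (s + 3)) := by
        have hcongr : ∫ t in c..d, (d - t) ^ 2 / 2 *
              (((d - t) / (d - c)) ^ s * A + ((t - c) / (d - c)) ^ s * B)
            = ∫ t in c..d, (A / (2 * (d - c) ^ s) * ((d - t) ^ 2 * (d - t) ^ s)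
                + B / (2 * (d - c) ^ s) * ((d - t) ^ 2 * (t - c) ^ s)) := by
          apply intervalIntegral.integral_congr
          intro t ht
          rw [Set.uIcc_of_le hcd.le] at ht
          show (d - t) ^ 2 / 2 * (((d - t) / (d - c)) ^ s * A + ((t - c) / (d - c)) ^ s * B)
            = A / (2 * (d - c) ^ s) * ((d - t) ^ 2 * (d - t) ^ s)
              + B / (2 * (d - c) ^ s) * ((d - t) ^ 2 * (t - c) ^ s)
          rw [Real.div_rpow (by linarith [ht.2]) hd.le, Real.div_rpow (by linarith [ht.1]) hd.le]
          have : (d - c) ^ s ≠ 0 := ne_of_gt (Real.rpow_pos_of_pos hd s)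
          field_simp
        rw [hcongr]
        have i1 : IntervalIntegrable
            (fun t => A / (2 * (d - c) ^ s) * ((d - t) ^ 2 * (d - t) ^ s)) volume c d := by
          apply Continuous.intervalIntegrable
          exact continuous_const.mul ((by continuity : Continuous fun t : ℝ => (d - t) ^ 2).mul
            (cont_rpow_comp s hs (by continuity)))
        have i2 : IntervalIntegrable
            (fun t => B / (2 * (d - c) ^ s) * ((d - t) ^ 2 * (t - c) ^ s)) volume c d := by
          apply Continuous.intervalIntegrable
          exact continuous_const.mul ((by continuity : Continuous fun t : ℝ => (d - t) ^ 2).mul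
            (cont_rpow_comp s hs (by continuity)))
        rw [intervalIntegral.integral_add i1 i2, intervalIntegral.integral_const_mul,
          intervalIntegral.integral_const_mul, intg_J2' s c d hs hcd.le, intg_J1' s c d hs hcd.le]
        have e4 : (d - c) ^ (s + 3) = (d - c) ^ s * (d - c) ^ (3:ℕ) := by
          rw [Real.rpow_add_of_nonneg hd.le hs.le (by norm_num),
            show (3:ℝ) = ((3:ℕ):ℝ) by norm_num, Real.rpow_natCast]
        rw [e4]
        have h1 : s + 1 ≠ 0 := by linarith
        have h2 : s + 2 ≠ 0 := by linarith
        have h3 : s + 3 ≠ 0 := by linarith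
        have hds : (d - c) ^ s ≠ 0 := ne_of_gt (Real.rpow_pos_of_pos hd s)
        field_simp



theorem stmt4 (a b : ℝ) (ha : 0 ≤ a) (hab : a < b) (f f' f'' : ℝ → ℝ)
    (hf' : ∀ t ∈ Set.Icc a b, HasDerivAt f (f' t) t)
    (hf'' : ∀ t ∈ Set.Icc a b, HasDerivAt f' (f'' t) t)
    (hint : IntervalIntegrable f'' volume a b)
    (s : ℝ) (hs0 : 0 < s) (hs1 : s ≤ 1)
    (hconv : SConvexOn s (Set.Icc a b) (fun t => |f'' t|)) :
    |((1 / (b - a)) * ∫ t in a..b, f t) - f ((a + b) / 2)|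
      ≤ (b - a) ^ 2 / (8 * (s + 1) * (s + 2) * (s + 3)) *
          (|f'' a| + (s ^ 2 + 3 * s + 2) * |f'' ((a + b) / 2)| + |f'' b|) := by
  have hba : 0 < b - a := by linarith
  have ham : a < (a + b) / 2 := by linarith
  have hmb : (a + b) / 2 < b := by linarith
  have hmem : (a + b) / 2 ∈ Set.Icc a b := ⟨ham.le, hmb.le⟩
  have huIcc : Set.uIcc a b = Set.Icc a b := Set.uIcc_of_le hab.le
  have hsub1 : Set.uIcc a ((a + b) / 2) ⊆ Set.uIcc a b := by
    rw [Set.uIcc_of_le ham.le, huIcc]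
    exact Set.Icc_subset_Icc le_rfl hmb.le
  have hsub2 : Set.uIcc ((a + b) / 2) b ⊆ Set.uIcc a b := by
    rw [Set.uIcc_of_le hmb.le, huIcc]
    exact Set.Icc_subset_Icc ham.le le_rfl
  have hsub1' : Set.uIcc a ((a + b) / 2) ⊆ Set.Icc a b := huIcc ▸ hsub1
  have hsub2' : Set.uIcc ((a + b) / 2) b ⊆ Set.Icc a b := huIcc ▸ hsub2
  have hfc : ContinuousOn f (Set.uIcc a b) := fun t ht =>
    ((hf' t (huIcc ▸ ht)).continuousAt).continuousWithinAt
  have hf'c : ContinuousOn f' (Set.uIcc a b) := fun t ht =>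
    ((hf'' t (huIcc ▸ ht)).continuousAt).continuousWithinAt
  have intf1 : IntervalIntegrable f volume a ((a + b) / 2) :=
    (hfc.mono hsub1).intervalIntegrable
  have intf2 : IntervalIntegrable f volume ((a + b) / 2) b :=
    (hfc.mono hsub2).intervalIntegrable
  have intf'1 : IntervalIntegrable f' volume a ((a + b) / 2) :=
    (hf'c.mono hsub1).intervalIntegrable
  have intf'2 : IntervalIntegrable f' volume ((a + b) / 2) b :=
    (hf'c.mono hsub2).intervalIntegrable
  have intf''1 : IntervalIntegrable f'' volume a ((a + b) / 2) := hint.mono_set hsub1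
  have intf''2 : IntervalIntegrable f'' volume ((a + b) / 2) b := hint.mono_set hsub2
  have hu1 : ∀ x : ℝ, HasDerivAt (fun t => (t - a) ^ 2 / 2) (x - a) x := by
    intro x
    have h := (((hasDerivAt_id x).sub_const a).pow 2).div_const 2
    convert h using 1
    iterate 3 rfl
    simp
  have hu2 : ∀ x : ℝ, HasDerivAt (fun t => (b - t) ^ 2 / 2) (x - b) x := by
    intro x
    have h := (((hasDerivAt_id x).const_sub b).pow 2).div_const 2
    convert h using 1
    iterate 3 rfl
    simp
    ring
  have ibp1 : ∫ t in a..((a + b) / 2), (t - a) ^ 2 / 2 * f'' t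
      = ((a + b) / 2 - a) ^ 2 / 2 * f' ((a + b) / 2) - (a - a) ^ 2 / 2 * f' a
        - ∫ t in a..((a + b) / 2), (t - a) * f' t :=
    intervalIntegral.integral_mul_deriv_eq_deriv_mul
      (fun x _ => hu1 x) (fun x hx => hf'' x (hsub1' hx))
      ((continuous_id.sub continuous_const).intervalIntegrable _ _) intf''1
  have ibp2 : ∫ t in a..((a + b) / 2), (t - a) * f' t
      = ((a + b) / 2 - a) * f ((a + b) / 2) - (a - a) * f a
        - ∫ t in a..((a + b) / 2), 1 * f t :=
    intervalIntegral.integral_mul_deriv_eq_deriv_mul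
      (fun x _ => (hasDerivAt_id x).sub_const a) (fun x hx => hf' x (hsub1' hx))
      (continuous_const.intervalIntegrable _ _) intf'1
  have ibp3 : ∫ t in ((a + b) / 2)..b, (b - t) ^ 2 / 2 * f'' t
      = (b - b) ^ 2 / 2 * f' b - (b - (a + b) / 2) ^ 2 / 2 * f' ((a + b) / 2)
        - ∫ t in ((a + b) / 2)..b, (t - b) * f' t :=
    intervalIntegral.integral_mul_deriv_eq_deriv_mul
      (fun x _ => hu2 x) (fun x hx => hf'' x (hsub2' hx))
      ((continuous_id.sub continuous_const).intervalIntegrable _ _) intf''2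
  have ibp4 : ∫ t in ((a + b) / 2)..b, (t - b) * f' t
      = (b - b) * f b - ((a + b) / 2 - b) * f ((a + b) / 2)
        - ∫ t in ((a + b) / 2)..b, 1 * f t :=
    intervalIntegral.integral_mul_deriv_eq_deriv_mul
      (fun x _ => (hasDerivAt_id x).sub_const b) (fun x hx => hf' x (hsub2' hx))
      (continuous_const.intervalIntegrable _ _) intf'2
  simp only [one_mul] at ibp2 ibp4
  have hsplit := intervalIntegral.integral_add_adjacent_intervals intf1 intf2
  have hkey : (1 / (b - a)) * (∫ t in a..b, f t) - f ((a + b) / 2)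
      = ((∫ t in a..((a + b) / 2), (t - a) ^ 2 / 2 * f'' t)
          + ∫ t in ((a + b) / 2)..b, (b - t) ^ 2 / 2 * f'' t) / (b - a) := by
    rw [ibp1, ibp2, ibp3, ibp4, ← hsplit]
    field_simp
    ring
  have hb1 : ∀ t ∈ Set.Icc a ((a + b) / 2), |f'' t|
      ≤ (((a + b) / 2 - t) / ((a + b) / 2 - a)) ^ s * |f'' a|
        + ((t - a) / ((a + b) / 2 - a)) ^ s * |f'' ((a + b) / 2)| := by
    intro t ht
    have hden : (0:ℝ) < (a + b) / 2 - a := by linarith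
    have hα : 0 ≤ ((a + b) / 2 - t) / ((a + b) / 2 - a) :=
      div_nonneg (by linarith [ht.2]) hden.le
    have hβ : 0 ≤ (t - a) / ((a + b) / 2 - a) :=
      div_nonneg (by linarith [ht.1]) hden.le
    have hsum : ((a + b) / 2 - t) / ((a + b) / 2 - a) + (t - a) / ((a + b) / 2 - a) = 1 := by
      rw [← add_div, div_eq_one_iff_eq hden.ne']
      ring
    have hcomb : ((a + b) / 2 - t) / ((a + b) / 2 - a) * a
        + (t - a) / ((a + b) / 2 - a) * ((a + b) / 2) = t := by
      rw [div_mul_eq_mul_div, div_mul_eq_mul_div, ← add_div, div_eq_iff hden.ne']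
      ring
    have h2 := hconv a ⟨le_rfl, hab.le⟩ ((a + b) / 2) hmem _ _ hα hβ hsum
    simp only [] at h2
    rw [hcomb] at h2
    exact h2
  have hb2 : ∀ t ∈ Set.Icc ((a + b) / 2) b, |f'' t|
      ≤ ((b - t) / (b - (a + b) / 2)) ^ s * |f'' ((a + b) / 2)|
        + ((t - (a + b) / 2) / (b - (a + b) / 2)) ^ s * |f'' b| := by
    intro t ht
    have hden : (0:ℝ) < b - (a + b) / 2 := by linarith
    have hα : 0 ≤ (b - t) / (b - (a + b) / 2) := div_nonneg (by linarith [ht.2]) hden.le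
    have hβ : 0 ≤ (t - (a + b) / 2) / (b - (a + b) / 2) :=
      div_nonneg (by linarith [ht.1]) hden.le
    have hsum : (b - t) / (b - (a + b) / 2) + (t - (a + b) / 2) / (b - (a + b) / 2) = 1 := by
      rw [← add_div, div_eq_one_iff_eq hden.ne']
      ring
    have hcomb : (b - t) / (b - (a + b) / 2) * ((a + b) / 2)
        + (t - (a + b) / 2) / (b - (a + b) / 2) * b = t := by
      rw [div_mul_eq_mul_div, div_mul_eq_mul_div, ← add_div, div_eq_iff hden.ne']
      ring
    have h2 := hconv ((a + b) / 2) hmem b ⟨hab.le, le_rfl⟩ _ _ hα hβ hsum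
    simp only [] at h2
    rw [hcomb] at h2
    exact h2
  have hB1 := half_bound s a ((a + b) / 2) hs0 ham f'' intf''1 (|f'' a|)
    (|f'' ((a + b) / 2)|) hb1
  have hB2 := half_bound' s ((a + b) / 2) b hs0 hmb f'' intf''2 (|f'' ((a + b) / 2)|)
    (|f'' b|) hb2
  rw [hkey, abs_div, abs_of_pos hba]
  have habs : |(∫ t in a..((a + b) / 2), (t - a) ^ 2 / 2 * f'' t)
        + ∫ t in ((a + b) / 2)..b, (b - t) ^ 2 / 2 * f'' t|
      ≤ (((a + b) / 2 - a) ^ 3 * |f'' a| / ((s + 1) * (s + 2) * (s + 3))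
          + ((a + b) / 2 - a) ^ 3 * |f'' ((a + b) / 2)| / (2 * (s + 3)))
        + ((b - (a + b) / 2) ^ 3 * |f'' ((a + b) / 2)| / (2 * (s + 3))
          + (b - (a + b) / 2) ^ 3 * |f'' b| / ((s + 1) * (s + 2) * (s + 3))) :=
    le_trans (abs_add_le _ _) (add_le_add hB1 hB2)
  calc |(∫ t in a..((a + b) / 2), (t - a) ^ 2 / 2 * f'' t)
        + ∫ t in ((a + b) / 2)..b, (b - t) ^ 2 / 2 * f'' t| / (b - a)
      ≤ ((((a + b) / 2 - a) ^ 3 * |f'' a| / ((s + 1) * (s + 2) * (s + 3))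
          + ((a + b) / 2 - a) ^ 3 * |f'' ((a + b) / 2)| / (2 * (s + 3)))
        + ((b - (a + b) / 2) ^ 3 * |f'' ((a + b) / 2)| / (2 * (s + 3))
          + (b - (a + b) / 2) ^ 3 * |f'' b| / ((s + 1) * (s + 2) * (s + 3)))) / (b - a) :=
        div_le_div_of_nonneg_right habs hba.le
    _ = (b - a) ^ 2 / (8 * (s + 1) * (s + 2) * (s + 3)) *
          (|f'' a| + (s ^ 2 + 3 * s + 2) * |f'' ((a + b) / 2)| + |f'' b|) := by
        have h1 : s + 1 ≠ 0 := by linarith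
        have h2 : s + 2 ≠ 0 := by linarith
        have h3 : s + 3 ≠ 0 := by linarith
        field_simp
        ring
end

section
/- Let f : [a,b] → ℝ (a < b) be such that f′ is absolutely continuous on [a,b] and f″ ∈ L¹[a,b]. If |f″|^q is s-convex in the second sense on [a,b] for some fixed s ∈ (0,1], where q > 1 and 1/p + 1/q = 1, then for all x ∈ [a, (a+b)/2]: |(1/(b−a))∫_a^b f(t) dt − (1/2)[f(x)+f(a+b−x)] + (1/2)(x − (3a+b)/4)[f′(x) − f′(a+b−x)]| ≤ (1/(2(b−a)(2p+1)^{1/p}(s+1)^{1/q}))[(x−a)³(|f″(a)|^q + |f″(x)|^q)^{1/q} + ((a+b−2x)³/4)(|f″(x)|^q + |f″(a+b−x)|^q)^{1/q} + (x−a)³(|f″(a+b−x)|^q + |f″(b)|^q)^{1/q}]. -/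
set_option maxHeartbeats 1000000

open MeasureTheory

open intervalIntegral in
lemma partsA (u v c : ℝ) (f f' f'' : ℝ → ℝ)
    (hf' : ∀ t ∈ Set.uIcc u v, HasDerivAt f (f' t) t)
    (hf'' : ∀ t ∈ Set.uIcc u v, HasDerivAt f' (f'' t) t)
    (hint : IntervalIntegrable f'' volume u v) :
    ∫ t in u..v, (t - c)^2 * f'' t
      = (v - c)^2 * f' v - (u - c)^2 * f' u
        - 2 * ((v - c) * f v - (u - c) * f u) + 2 * ∫ t in u..v, f t := by
  have hfc : ContinuousOn f (Set.uIcc u v) := fun t ht => (hf' t ht).continuousAt.continuousWithinAt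
  have hfc' : ContinuousOn f' (Set.uIcc u v) := fun t ht => (hf'' t ht).continuousAt.continuousWithinAt
  have hfi : IntervalIntegrable f volume u v := hfc.intervalIntegrable
  have hfi' : IntervalIntegrable f' volume u v := hfc'.intervalIntegrable
  have h1 : ∫ t in u..v, (t - c)^2 * f'' t
      = (v - c)^2 * f' v - (u - c)^2 * f' u - ∫ t in u..v, (2 * (t - c)) * f' t := by
    apply integral_mul_deriv_eq_deriv_mul (u' := fun t => 2 * (t - c)) (fun t _ => ?_) hf''
      (by apply Continuous.intervalIntegrable; continuity) hint
    simpa using ((hasDerivAt_id t).sub_const c).fun_pow 2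
  have h3 : ∫ t in u..v, (2 * (t - c)) * f' t = 2 * ∫ t in u..v, (t - c) * f' t := by
    rw [← intervalIntegral.integral_const_mul]; congr 1; ext t; ring
  have h4 : ∫ t in u..v, (t - c) * f' t
      = (v - c) * f v - (u - c) * f u - ∫ t in u..v, (1:ℝ) * f t := by
    apply integral_mul_deriv_eq_deriv_mul (u' := fun _ => (1:ℝ)) (fun t _ => ?_) hf'
      (by apply Continuous.intervalIntegrable; continuity) hfi'
    simpa using (hasDerivAt_id t).sub_const c
  simp only [one_mul] at h4
  rw [h1, h3, h4]; ring

lemma rpow_cont (s : ℝ) (hs : 0 < s) : Continuous (fun x : ℝ => x ^ s) :=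
  continuous_iff_continuousAt.2 fun x => Real.continuousAt_rpow_const x s (Or.inr hs.le)

lemma sconv_int (a b u v s q : ℝ) (hs0 : 0 < s) (huv : u < v)
    (hu : u ∈ Set.Icc a b) (hv : v ∈ Set.Icc a b) (g : ℝ → ℝ)
    (hmeas : AEStronglyMeasurable (fun t => |g t| ^ q) (volume.restrict (Set.Ioc u v)))
    (hconv : SConvexOn s (Set.Icc a b) (fun t => |g t| ^ q)) :
    IntegrableOn (fun t => |g t| ^ q) (Set.Ioc u v)
      ∧ ∫ t in u..v, |g t| ^ q ≤ (v - u) / (s + 1) * (|g u| ^ q + |g v| ^ q) := by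
  set G : ℝ → ℝ := fun t => |g t| ^ q with hG
  set h : ℝ → ℝ := fun t => ((v - t)/(v - u)) ^ s * G u + ((t - u)/(v - u)) ^ s * G v with hh
  have hGnn : ∀ t, 0 ≤ G t := fun t => Real.rpow_nonneg (abs_nonneg _) q
  have hcont : Continuous h := by
    apply Continuous.add <;> exact Continuous.mul ((rpow_cont s hs0).comp (by continuity)) continuous_const
  have hvu : (0:ℝ) < v - u := by linarith
  have hpt : ∀ t ∈ Set.Icc u v, G t ≤ h t := by
    intro t ht
    have h1 : 0 ≤ (v - t)/(v - u) := div_nonneg (by linarith [ht.2]) hvu.le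
    have h2 : 0 ≤ (t - u)/(v - u) := div_nonneg (by linarith [ht.1]) hvu.le
    have h3 : (v - t)/(v - u) + (t - u)/(v - u) = 1 := by field_simp; ring
    have h4 : (v - t)/(v - u) * u + (t - u)/(v - u) * v = t := by field_simp; ring
    have := hconv u hu v hv _ _ h1 h2 h3
    rw [h4] at this; exact this
  have hInt : IntegrableOn G (Set.Ioc u v) := by
    apply Integrable.mono' (hcont.integrableOn_Ioc) hmeas
    filter_upwards [ae_restrict_mem measurableSet_Ioc] with t ht
    rw [Real.norm_of_nonneg (hGnn t)]
    exact hpt t ⟨ht.1.le, ht.2⟩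
  refine ⟨hInt, ?_⟩
  have hle : ∫ t in u..v, G t ≤ ∫ t in u..v, h t := by
    apply intervalIntegral.integral_mono_on huv.le ((intervalIntegrable_iff_integrableOn_Ioc_of_le huv.le).2 hInt)
      (hcont.intervalIntegrable _ _) hpt
  refine hle.trans_eq ?_
  have e1 : ∫ t in u..v, ((v - t)/(v - u)) ^ s = (v - u)/(s + 1) := by
    have : ∀ t ∈ Set.uIcc u v, ((v - t)/(v - u)) ^ s = (v - t) ^ s / (v - u) ^ s := by
      intro t ht
      rw [Set.uIcc_of_le huv.le] at ht
      show ((v - t)/(v - u)) ^ s = (v - t) ^ s / (v - u) ^ s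
      exact Real.div_rpow (x := v - t) (y := v - u) (by linarith [ht.2]) hvu.le s
    rw [intervalIntegral.integral_congr this]
    rw [intervalIntegral.integral_div]
    have : ∫ t in u..v, (v - t) ^ s = ∫ t in v - v..v - u, t ^ s := by
      rw [← intervalIntegral.integral_comp_sub_left (fun t => t ^ s) v]
    rw [this, sub_self, integral_rpow (Or.inl (by linarith))]
    rw [Real.zero_rpow (by positivity), Real.rpow_add hvu, Real.rpow_one]
    field_simp
    ring
  have e2 : ∫ t in u..v, ((t - u)/(v - u)) ^ s = (v - u)/(s + 1) := by
    have : ∀ t ∈ Set.uIcc u v, ((t - u)/(v - u)) ^ s = (t - u) ^ s / (v - u) ^ s := by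
      intro t ht
      rw [Set.uIcc_of_le huv.le] at ht
      show ((t - u)/(v - u)) ^ s = (t - u) ^ s / (v - u) ^ s
      exact Real.div_rpow (x := t - u) (y := v - u) (by linarith [ht.1]) hvu.le s
    rw [intervalIntegral.integral_congr this]
    rw [intervalIntegral.integral_div]
    have : ∫ t in u..v, (t - u) ^ s = ∫ t in u - u..v - u, t ^ s := by
      rw [← intervalIntegral.integral_comp_sub_right (fun t => t ^ s) u]
    rw [this, sub_self, integral_rpow (Or.inl (by linarith))]
    rw [Real.zero_rpow (by positivity), Real.rpow_add hvu, Real.rpow_one]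
    field_simp
    ring
  have c1 : Continuous (fun t : ℝ => ((v - t)/(v - u)) ^ s * G u) :=
    ((rpow_cont s hs0).comp (by continuity : Continuous fun t : ℝ => (v - t)/(v - u))).mul
      continuous_const
  have c2 : Continuous (fun t : ℝ => ((t - u)/(v - u)) ^ s * G v) :=
    ((rpow_cont s hs0).comp (by continuity : Continuous fun t : ℝ => (t - u)/(v - u))).mul
      continuous_const
  show ∫ t in u..v, (((v - t)/(v - u)) ^ s * G u + ((t - u)/(v - u)) ^ s * G v) = _
  rw [intervalIntegral.integral_add (c1.intervalIntegrable _ _) (c2.intervalIntegrable _ _),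
    intervalIntegral.integral_mul_const, intervalIntegral.integral_mul_const, e1, e2]
  show (v - u) / (s + 1) * |g u| ^ q + (v - u) / (s + 1) * |g v| ^ q = _
  ring

lemma holder_int (u v c p q : ℝ) (hp : 1 < p) (hq : 1 < q) (hpq : 1 / p + 1 / q = 1)
    (huv : u ≤ v) (g : ℝ → ℝ)
    (hmeas : AEStronglyMeasurable g (volume.restrict (Set.Ioc u v)))
    (hgq : IntegrableOn (fun t => |g t| ^ q) (Set.Ioc u v)) :
    ∫ t in u..v, (t - c)^2 * |g t|
      ≤ (∫ t in u..v, ((t - c)^2) ^ p) ^ (1/p) * (∫ t in u..v, |g t| ^ q) ^ (1/q) := by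
  have hconj : p.HolderConjugate q := Real.holderConjugate_iff.2 ⟨hp, by simpa [one_div] using hpq⟩
  set μ := volume.restrict (Set.Ioc u v)
  have hp0 : (ENNReal.ofReal p) ≠ 0 := by
    simp [ENNReal.ofReal_eq_zero]; linarith
  have hq0 : (ENNReal.ofReal q) ≠ 0 := by
    simp [ENNReal.ofReal_eq_zero]; linarith
  have memf : MemLp (fun t : ℝ => (t - c)^2) (ENNReal.ofReal p) μ := by
    have hsm : AEStronglyMeasurable (fun t : ℝ => (t - c)^2) μ :=
      (Continuous.aestronglyMeasurable (by continuity))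
    have h1 : MemLp (fun t : ℝ => ‖(t - c)^2‖ ^ (ENNReal.ofReal p).toReal) (1 : ENNReal) μ := by
      rw [memLp_one_iff_integrable]
      have : Continuous (fun t : ℝ => ‖(t - c)^2‖ ^ (ENNReal.ofReal p).toReal) := by
        apply Continuous.rpow_const (by continuity)
        intro t; right; positivity
      exact this.integrableOn_Ioc
    have := (memLp_norm_rpow_iff hsm hp0 ENNReal.ofReal_ne_top).1 (by
      rwa [ENNReal.div_self hp0 ENNReal.ofReal_ne_top])
    exact this
  have memg : MemLp (fun t : ℝ => |g t|) (ENNReal.ofReal q) μ := by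
    have hsm : AEStronglyMeasurable (fun t : ℝ => |g t|) μ := hmeas.norm.congr (by
      filter_upwards with t using (Real.norm_eq_abs _))
    have h1 : MemLp (fun t : ℝ => ‖|g t|‖ ^ (ENNReal.ofReal q).toReal) (1 : ENNReal) μ := by
      rw [memLp_one_iff_integrable]
      have : (fun t : ℝ => ‖|g t|‖ ^ (ENNReal.ofReal q).toReal) = fun t => |g t| ^ q := by
        funext t; rw [Real.norm_eq_abs, abs_abs, ENNReal.toReal_ofReal (by linarith)]
      rw [this]; exact hgq
    have := (memLp_norm_rpow_iff hsm hq0 ENNReal.ofReal_ne_top).1 (by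
      rwa [ENNReal.div_self hq0 ENNReal.ofReal_ne_top])
    exact this
  have key := integral_mul_le_Lp_mul_Lq_of_nonneg hconj
    (f := fun t : ℝ => (t - c)^2) (g := fun t : ℝ => |g t|) (μ := μ)
    (Filter.Eventually.of_forall fun t => sq_nonneg _)
    (Filter.Eventually.of_forall fun t => abs_nonneg _) memf memg
  rw [intervalIntegral.integral_of_le huv, intervalIntegral.integral_of_le huv,
    intervalIntegral.integral_of_le huv]
  exact key

lemma ker_int_left (w z p : ℝ) (hp : 1 < p) (hwz : w ≤ z) :
    ∫ t in w..z, ((t - w)^2) ^ p = (z - w) ^ (2*p+1) / (2*p+1) := by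
  have hc : ∀ t ∈ Set.uIcc w z, ((t - w)^2) ^ p = (t - w) ^ (2*p) := by
    intro t ht
    rw [Set.uIcc_of_le hwz] at ht
    rw [← Real.rpow_natCast (t - w) 2, ← Real.rpow_mul (by linarith [ht.1])]
    norm_num
  rw [intervalIntegral.integral_congr hc]
  have h2 : ∫ t in w..z, (t - w) ^ (2*p) = ∫ t in w - w..z - w, t ^ (2*p) :=
    (intervalIntegral.integral_comp_sub_right (fun t => t ^ (2*p)) w)
  rw [h2, sub_self, integral_rpow (Or.inl (by linarith)), Real.zero_rpow (by positivity),
    sub_zero]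
lemma ker_int_right (w z p : ℝ) (hp : 1 < p) (hwz : w ≤ z) :
    ∫ t in w..z, ((t - z)^2) ^ p = (z - w) ^ (2*p+1) / (2*p+1) := by
  have hc : ∀ t ∈ Set.uIcc w z, ((t - z)^2) ^ p = (z - t) ^ (2*p) := by
    intro t ht
    rw [Set.uIcc_of_le hwz] at ht
    rw [show (t - z)^2 = (z - t)^2 by ring, ← Real.rpow_natCast (z - t) 2,
      ← Real.rpow_mul (by linarith [ht.2])]
    norm_num
  rw [intervalIntegral.integral_congr hc]
  have h2 : ∫ t in w..z, (z - t) ^ (2*p) = ∫ t in z - z..z - w, t ^ (2*p) :=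
    (intervalIntegral.integral_comp_sub_left (fun t => t ^ (2*p)) z)
  rw [h2, sub_self, integral_rpow (Or.inl (by linarith)), Real.zero_rpow (by positivity),
    sub_zero]

lemma exp3 (p q : ℝ) (hp : 1 < p) (hq : 1 < q) (hpq : 1/p + 1/q = 1) :
    (2*p+1)*(1/p) + 1/q = 3 := by
  have hp0 : p ≠ 0 := by positivity
  have hq0 : q ≠ 0 := by positivity
  field_simp at hpq ⊢
  nlinarith [hpq]

lemma alg1 (d s p q A B : ℝ) (hd : 0 ≤ d) (hp : 1 < p) (hq : 1 < q) (hpq : 1/p + 1/q = 1)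
    (hs : 0 < s) (hA : 0 ≤ A) (hB : 0 ≤ B) :
    (d ^ (2*p+1) / (2*p+1)) ^ (1/p) * ((d/(s+1)) * (A+B)) ^ (1/q)
      = d^3 / ((2*p+1) ^ (1/p) * (s+1) ^ (1/q)) * (A+B) ^ (1/q) := by
  have h2p : (0:ℝ) < 2*p+1 := by linarith
  have hs1 : (0:ℝ) < s+1 := by linarith
  rcases hd.eq_or_lt with h | h
  · rw [← h]
    rw [Real.zero_rpow (by positivity), zero_div, Real.zero_rpow (by positivity), zero_mul]
    norm_num
  · have hd3 : d ^ ((2*p+1)*(1/p)) * d ^ (1/q) = d ^ (3:ℕ) := by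
      rw [← Real.rpow_add h, exp3 p q hp hq hpq, ← Real.rpow_natCast d 3]
      norm_num
    rw [Real.div_rpow (by positivity) h2p.le, Real.mul_rpow (by positivity) (by positivity),
      Real.div_rpow hd (by positivity), ← Real.rpow_mul hd]
    calc d ^ ((2*p+1)*(1/p)) / (2*p+1) ^ (1/p) * (d ^ (1/q) / (s+1) ^ (1/q) * (A+B) ^ (1/q))
        = (d ^ ((2*p+1)*(1/p)) * d ^ (1/q)) * (A+B) ^ (1/q)
            / ((2*p+1) ^ (1/p) * (s+1) ^ (1/q)) := by ring
      _ = _ := by rw [hd3]; ring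

lemma algmid (d s p q A B : ℝ) (hd : 0 ≤ d) (hp : 1 < p) (hq : 1 < q) (hpq : 1/p + 1/q = 1)
    (hs : 0 < s) (hA : 0 ≤ A) (hB : 0 ≤ B) :
    (2 * d ^ (2*p+1) / (2*p+1)) ^ (1/p) * ((2*d/(s+1)) * (A+B)) ^ (1/q)
      = (2*d)^3/4 / ((2*p+1) ^ (1/p) * (s+1) ^ (1/q)) * (A+B) ^ (1/q) := by
  have h2p : (0:ℝ) < 2*p+1 := by linarith
  have hs1 : (0:ℝ) < s+1 := by linarith
  rcases hd.eq_or_lt with h | h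
  · rw [← h]
    rw [Real.zero_rpow (by positivity), mul_zero, zero_div, Real.zero_rpow (by positivity)]
    norm_num
  · have h2 : (2:ℝ) ^ (1/p) * (2:ℝ) ^ (1/q) = 2 := by
      rw [← Real.rpow_add (by norm_num), hpq, Real.rpow_one]
    have hd3 : d ^ ((2*p+1)*(1/p)) * d ^ (1/q) = d ^ (3:ℕ) := by
      rw [← Real.rpow_add h, exp3 p q hp hq hpq, ← Real.rpow_natCast d 3]
      norm_num
    rw [mul_div_assoc, Real.mul_rpow (by norm_num) (by positivity),
      Real.div_rpow (by positivity) h2p.le,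
      Real.mul_rpow (by positivity) (by positivity),
      Real.div_rpow (by positivity) (by positivity),
      Real.mul_rpow (by norm_num) hd,
      ← Real.rpow_mul hd]
    calc (2:ℝ) ^ (1/p) * (d ^ ((2*p+1)*(1/p)) / (2*p+1) ^ (1/p))
          * ((2:ℝ) ^ (1/q) * d ^ (1/q) / (s+1) ^ (1/q) * (A+B) ^ (1/q))
        = ((2:ℝ) ^ (1/p) * (2:ℝ) ^ (1/q)) * (d ^ ((2*p+1)*(1/p)) * d ^ (1/q))
            * (A+B) ^ (1/q) / ((2*p+1) ^ (1/p) * (s+1) ^ (1/q)) := by ring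
      _ = _ := by rw [hd3, h2]; ring

lemma piece (a b u v c s p q : ℝ) (hs0 : 0 < s) (hp : 1 < p) (hq : 1 < q)
    (hpq : 1/p + 1/q = 1) (hu : u ∈ Set.Icc a b) (hv : v ∈ Set.Icc a b) (huv : u ≤ v)
    (g : ℝ → ℝ) (hint : IntervalIntegrable g volume a b)
    (hconv : SConvexOn s (Set.Icc a b) (fun t => |g t| ^ q)) :
    |∫ t in u..v, (t - c)^2 * g t|
      ≤ (∫ t in u..v, ((t - c)^2) ^ p) ^ (1/p)
        * ((v - u)/(s+1) * (|g u|^q + |g v|^q)) ^ (1/q) := by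
  rcases huv.eq_or_lt with h | h
  · rw [← h]
    simp [intervalIntegral.integral_same, Real.zero_rpow (show (1:ℝ)/q ≠ 0 by positivity)]
    positivity
  · have hmeas : AEStronglyMeasurable g (volume.restrict (Set.Ioc u v)) :=
      hint.1.aestronglyMeasurable.mono_measure
        (Measure.restrict_mono (Set.Ioc_subset_Ioc hu.1 hv.2) le_rfl)
    have hmq : AEStronglyMeasurable (fun t => |g t| ^ q) (volume.restrict (Set.Ioc u v)) :=
      Continuous.comp_aestronglyMeasurable ((rpow_cont q (by linarith)).comp continuous_abs) hmeas
    obtain ⟨hInt, hle⟩ := sconv_int a b u v s q hs0 h hu hv g hmq hconv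
    have h1 : |∫ t in u..v, (t - c)^2 * g t| ≤ ∫ t in u..v, |(t - c)^2 * g t| :=
      intervalIntegral.abs_integral_le_integral_abs huv
    have h2 : ∫ t in u..v, |(t - c)^2 * g t| = ∫ t in u..v, (t - c)^2 * |g t| := by
      apply intervalIntegral.integral_congr
      intro t ht
      simp [abs_mul, abs_of_nonneg (sq_nonneg (t - c))]
    have h3 := holder_int u v c p q hp hq hpq huv g hmeas hInt
    have hnn : 0 ≤ ∫ t in u..v, |g t| ^ q :=
      intervalIntegral.integral_nonneg huv (fun t _ => Real.rpow_nonneg (abs_nonneg _) q)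
    have h4 : (∫ t in u..v, |g t| ^ q) ^ (1/q)
        ≤ ((v - u)/(s+1) * (|g u|^q + |g v|^q)) ^ (1/q) :=
      Real.rpow_le_rpow hnn hle (by positivity)
    refine h1.trans ?_
    rw [h2]
    refine h3.trans ?_
    exact mul_le_mul_of_nonneg_left h4 (Real.rpow_nonneg (intervalIntegral.integral_nonneg huv
      (fun t _ => Real.rpow_nonneg (sq_nonneg _) p)) _)

theorem stmt6 (a b : ℝ) (ha : 0 ≤ a) (hab : a < b) (f f' f'' : ℝ → ℝ)
    (hf' : ∀ t ∈ Set.Icc a b, HasDerivAt f (f' t) t)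
    (hf'' : ∀ t ∈ Set.Icc a b, HasDerivAt f' (f'' t) t)
    (hint : IntervalIntegrable f'' volume a b)
    (s : ℝ) (hs0 : 0 < s) (hs1 : s ≤ 1)
    (p q : ℝ) (hp : 1 < p) (hq : 1 < q) (hpq : 1 / p + 1 / q = 1)
    (hconv : SConvexOn s (Set.Icc a b) (fun t => |f'' t| ^ q)) :
    ∀ x ∈ Set.Icc a ((a + b) / 2),
      |((1 / (b - a)) * ∫ t in a..b, f t) - (1 / 2) * (f x + f (a + b - x))
          + (1 / 2) * (x - (3 * a + b) / 4) * (f' x - f' (a + b - x))|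
        ≤ 1 / (2 * (b - a) * (2 * p + 1) ^ (1 / p) * (s + 1) ^ (1 / q)) *
          ((x - a) ^ 3 * (|f'' a| ^ q + |f'' x| ^ q) ^ (1 / q)
            + (a + b - 2 * x) ^ 3 / 4 * (|f'' x| ^ q + |f'' (a + b - x)| ^ q) ^ (1 / q)
            + (x - a) ^ 3 * (|f'' (a + b - x)| ^ q + |f'' b| ^ q) ^ (1 / q)) := by
  intro x hx
  obtain ⟨hax, hxm⟩ := hx
  have hxb : x ≤ b := by linarith
  have hxy : x ≤ a + b - x := by linarith
  have hmy : (a + b) / 2 ≤ a + b - x := by linarith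
  have hyb : a + b - x ≤ b := by linarith
  have hay : a ≤ a + b - x := by linarith
  have hxI : x ∈ Set.Icc a b := ⟨hax, hxb⟩
  have hyI : (a + b - x) ∈ Set.Icc a b := ⟨hay, hyb⟩
  have haI : a ∈ Set.Icc a b := ⟨le_rfl, hab.le⟩
  have hbI : b ∈ Set.Icc a b := ⟨hab.le, le_rfl⟩
  have hs1' : Set.uIcc a x ⊆ Set.Icc a b := by
    rw [Set.uIcc_of_le hax]; exact Set.Icc_subset_Icc le_rfl hxb
  have hs2' : Set.uIcc x (a + b - x) ⊆ Set.Icc a b := by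
    rw [Set.uIcc_of_le hxy]; exact Set.Icc_subset_Icc hax hyb
  have hs3' : Set.uIcc (a + b - x) b ⊆ Set.Icc a b := by
    rw [Set.uIcc_of_le hyb]; exact Set.Icc_subset_Icc hay le_rfl
  have hs4' : Set.uIcc a (a + b - x) ⊆ Set.Icc a b := by
    rw [Set.uIcc_of_le hay]; exact Set.Icc_subset_Icc le_rfl hyb
  have hab' : Set.uIcc a b = Set.Icc a b := Set.uIcc_of_le hab.le
  -- integration by parts identities
  have e1 := partsA a x a f f' f'' (fun t ht => hf' t (hs1' ht)) (fun t ht => hf'' t (hs1' ht))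
    (hint.mono_set (hab' ▸ hs1'))
  have e2 := partsA x (a + b - x) ((a + b)/2) f f' f'' (fun t ht => hf' t (hs2' ht))
    (fun t ht => hf'' t (hs2' ht)) (hint.mono_set (hab' ▸ hs2'))
  have e3 := partsA (a + b - x) b b f f' f'' (fun t ht => hf' t (hs3' ht))
    (fun t ht => hf'' t (hs3' ht)) (hint.mono_set (hab' ▸ hs3'))
  -- split of the integral of f
  have hfc : ContinuousOn f (Set.Icc a b) :=
    fun t ht => (hf' t ht).continuousAt.continuousWithinAt
  have i1 : IntervalIntegrable f volume a x := (hfc.mono hs1').intervalIntegrable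
  have i2 : IntervalIntegrable f volume x (a + b - x) := (hfc.mono hs2').intervalIntegrable
  have i3 : IntervalIntegrable f volume (a + b - x) b := (hfc.mono hs3').intervalIntegrable
  have i4 : IntervalIntegrable f volume a (a + b - x) := (hfc.mono hs4').intervalIntegrable
  have hsplit : (∫ t in a..x, f t) + ∫ t in x..(a + b - x), f t = ∫ t in a..(a + b - x), f t :=
    intervalIntegral.integral_add_adjacent_intervals i1 i2
  have hsplit2 : (∫ t in a..(a + b - x), f t) + ∫ t in (a + b - x)..b, f t = ∫ t in a..b, f t :=
    intervalIntegral.integral_add_adjacent_intervals i4 i3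
  have hba : b - a ≠ 0 := by linarith
  have key : ((1 / (b - a)) * ∫ t in a..b, f t) - (1 / 2) * (f x + f (a + b - x))
          + (1 / 2) * (x - (3 * a + b) / 4) * (f' x - f' (a + b - x))
      = 1/(2*(b-a)) * ((∫ t in a..x, (t - a)^2 * f'' t)
          + (∫ t in x..(a + b - x), (t - (a + b)/2)^2 * f'' t)
          + (∫ t in (a + b - x)..b, (t - b)^2 * f'' t)) := by
    rw [e1, e2, e3, ← hsplit2, ← hsplit]
    field_simp
    ring
  rw [key]
  -- bounds for the three pieces
  have hnnA : (0:ℝ) ≤ |f'' a| ^ q := Real.rpow_nonneg (abs_nonneg _) q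
  have hnnX : (0:ℝ) ≤ |f'' x| ^ q := Real.rpow_nonneg (abs_nonneg _) q
  have hnnY : (0:ℝ) ≤ |f'' (a + b - x)| ^ q := Real.rpow_nonneg (abs_nonneg _) q
  have hnnB : (0:ℝ) ≤ |f'' b| ^ q := Real.rpow_nonneg (abs_nonneg _) q
  have q1 : |∫ t in a..x, (t - a)^2 * f'' t|
      ≤ (x - a)^3 / ((2*p+1) ^ (1/p) * (s+1) ^ (1/q)) * (|f'' a|^q + |f'' x|^q) ^ (1/q) := by
    have h := piece a b a x a s p q hs0 hp hq hpq haI hxI hax f'' hint hconv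
    rw [ker_int_left a x p hp hax] at h
    refine h.trans_eq ?_
    exact alg1 (x - a) s p q _ _ (by linarith) hp hq hpq hs0 hnnA hnnX
  have q3 : |∫ t in (a + b - x)..b, (t - b)^2 * f'' t|
      ≤ (b - (a + b - x))^3 / ((2*p+1) ^ (1/p) * (s+1) ^ (1/q))
        * (|f'' (a + b - x)|^q + |f'' b|^q) ^ (1/q) := by
    have h := piece a b (a + b - x) b b s p q hs0 hp hq hpq hyI hbI hyb f'' hint hconv
    rw [ker_int_right (a + b - x) b p hp hyb] at h
    refine h.trans_eq ?_
    exact alg1 (b - (a + b - x)) s p q _ _ (by linarith) hp hq hpq hs0 hnnY hnnB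
  have hker2 : ∫ t in x..(a + b - x), ((t - (a + b)/2)^2) ^ p
      = 2 * ((a + b)/2 - x) ^ (2*p+1) / (2*p+1) := by
    have c1 : Continuous (fun t : ℝ => ((t - (a + b)/2)^2) ^ p) :=
      (rpow_cont p (by linarith)).comp (by continuity)
    rw [← intervalIntegral.integral_add_adjacent_intervals (b := (a + b)/2)
      (c1.intervalIntegrable _ _) (c1.intervalIntegrable _ _),
      ker_int_right x ((a + b)/2) p hp hxm, ker_int_left ((a + b)/2) (a + b - x) p hp hmy,
      show (a + b - x - (a + b)/2) = ((a + b)/2 - x) by ring]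
    ring
  have q2 : |∫ t in x..(a + b - x), (t - (a + b)/2)^2 * f'' t|
      ≤ (a + b - 2*x)^3/4 / ((2*p+1) ^ (1/p) * (s+1) ^ (1/q))
        * (|f'' x|^q + |f'' (a + b - x)|^q) ^ (1/q) := by
    have h := piece a b x (a + b - x) ((a + b)/2) s p q hs0 hp hq hpq hxI hyI hxy f'' hint hconv
    rw [hker2] at h
    refine h.trans_eq ?_
    rw [show (a + b - x - x) = 2 * ((a + b)/2 - x) by ring,
      show (a + b - 2*x) = 2 * ((a + b)/2 - x) by ring]
    exact algmid ((a + b)/2 - x) s p q _ _ (by linarith) hp hq hpq hs0 hnnX hnnY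
  have hpos : (0:ℝ) < (2*p+1) ^ (1/p) * (s+1) ^ (1/q) := by
    apply mul_pos <;> apply Real.rpow_pos_of_pos <;> linarith
  have hco : (0:ℝ) ≤ 1/(2*(b-a)) := le_of_lt (div_pos one_pos (by linarith))
  calc |1/(2*(b-a)) * ((∫ t in a..x, (t - a)^2 * f'' t)
          + (∫ t in x..(a + b - x), (t - (a + b)/2)^2 * f'' t)
          + (∫ t in (a + b - x)..b, (t - b)^2 * f'' t))|
      = 1/(2*(b-a)) * |(∫ t in a..x, (t - a)^2 * f'' t)
          + (∫ t in x..(a + b - x), (t - (a + b)/2)^2 * f'' t)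
          + (∫ t in (a + b - x)..b, (t - b)^2 * f'' t)| := by
        rw [abs_mul, abs_of_nonneg hco]
    _ ≤ 1/(2*(b-a)) * (|∫ t in a..x, (t - a)^2 * f'' t|
          + |∫ t in x..(a + b - x), (t - (a + b)/2)^2 * f'' t|
          + |∫ t in (a + b - x)..b, (t - b)^2 * f'' t|) := by
        apply mul_le_mul_of_nonneg_left (abs_add_three _ _ _) hco
    _ ≤ 1/(2*(b-a)) * ((x - a)^3 / ((2*p+1) ^ (1/p) * (s+1) ^ (1/q)) * (|f'' a|^q + |f'' x|^q) ^ (1/q)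
          + (a + b - 2*x)^3/4 / ((2*p+1) ^ (1/p) * (s+1) ^ (1/q)) * (|f'' x|^q + |f'' (a + b - x)|^q) ^ (1/q)
          + (b - (a + b - x))^3 / ((2*p+1) ^ (1/p) * (s+1) ^ (1/q)) * (|f'' (a + b - x)|^q + |f'' b|^q) ^ (1/q)) := by
        apply mul_le_mul_of_nonneg_left (add_le_add (add_le_add q1 q2) q3) hco
    _ = _ := by
        field_simp
        ring
end

section
/- Let f : [a,b] → ℝ (a < b) be such that f′ is absolutely continuous on [a,b], f″ ∈ L¹[a,b], and |f″|^q is s-convex in the second sense on [a,b] for some fixed s ∈ (0,1], where q > 1 and 1/p + 1/q = 1. If x ∈ [a, (a+b)/2] satisfies f′(x) = f′(a+b−x), then |(1/(b−a))∫_a^b f(t) dt − (1/2)[f(x)+f(a+b−x)]| ≤ (1/(2(b−a)(2p+1)^{1/p}(s+1)^{1/q}))[(x−a)³(|f″(a)|^q + |f″(x)|^q)^{1/q} + ((a+b−2x)³/4)(|f″(x)|^q + |f″(a+b−x)|^q)^{1/q} + (x−a)³(|f″(a+b−x)|^q + |f″(b)|^q)^{1/q}]. -/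
open MeasureTheory intervalIntegral

lemma kerInt0 (p : ℝ) (hp : 0 < p) (r : ℝ) (hr : 0 ≤ r) :
    ∫ u in (0:ℝ)..r, (u ^ 2 / 2) ^ p = r ^ (2 * p + 1) / ((2 * p + 1) * 2 ^ p) := by
  have h2p : (0:ℝ) < 2 * p + 1 := by linarith
  have hcong : ∀ u ∈ Set.uIcc (0:ℝ) r, (u ^ 2 / 2) ^ p = u ^ (2 * p) / 2 ^ p := by
    intro u hu
    rw [Set.uIcc_of_le hr] at hu
    have hu0 : (0:ℝ) ≤ u := hu.1
    rw [Real.div_rpow (sq_nonneg u) (by norm_num), ← Real.rpow_natCast u 2,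
      ← Real.rpow_mul hu0]
    norm_num [mul_comm]
  rw [intervalIntegral.integral_congr hcong, intervalIntegral.integral_div,
    integral_rpow (Or.inl (by linarith : (-1:ℝ) < 2 * p)),
    Real.zero_rpow (by positivity : 2 * p + 1 ≠ 0), sub_zero, div_div]

lemma kerIntR (p : ℝ) (hp : 0 < p) (c d : ℝ) (hcd : c ≤ d) :
    ∫ t in c..d, ((t - c) ^ 2 / 2) ^ p
      = (d - c) ^ (2 * p + 1) / ((2 * p + 1) * 2 ^ p) := by
  have h := intervalIntegral.integral_comp_sub_right (a := c) (b := d)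
    (fun u => (u ^ 2 / 2) ^ p) c
  rw [h, sub_self]
  exact kerInt0 p hp (d - c) (by linarith)

lemma kerIntL (p : ℝ) (hp : 0 < p) (c d : ℝ) (hcd : c ≤ d) :
    ∫ t in c..d, ((t - d) ^ 2 / 2) ^ p
      = (d - c) ^ (2 * p + 1) / ((2 * p + 1) * 2 ^ p) := by
  have h := intervalIntegral.integral_comp_sub_right (a := c) (b := d)
    (fun u => (u ^ 2 / 2) ^ p) d
  rw [h, sub_self]
  have h2 := intervalIntegral.integral_comp_neg (a := (0:ℝ)) (b := d - c)
    (fun u => (u ^ 2 / 2) ^ p)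
  simp only [neg_zero, neg_sq] at h2
  have hcd' : c - d = -(d - c) := by ring
  rw [hcd', ← h2]
  exact kerInt0 p hp (d - c) (by linarith)

lemma rpow_alg (p q s X P c₀ : ℝ) (hp : 0 < p) (hq : 0 < q) (hpq : 1 / p + 1 / q = 1)
    (hs : 0 < s + 1) (hX : 0 ≤ X) (hP : 0 ≤ P) (hc : 0 ≤ c₀) :
    (c₀ * X ^ (2 * p + 1) / ((2 * p + 1) * 2 ^ p)) ^ (1 / p) * (c₀ * X * P / (s + 1)) ^ (1 / q)
      = c₀ * (X ^ (3:ℝ) * P ^ (1 / q) / (2 * (2 * p + 1) ^ (1 / p) * (s + 1) ^ (1 / q))) := by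
  have hpne : p ≠ 0 := ne_of_gt hp
  have h2p : (0:ℝ) < 2 * p + 1 := by linarith
  have hXP : (0:ℝ) ≤ X ^ (2 * p + 1) := Real.rpow_nonneg hX _
  have h2pow : (0:ℝ) ≤ (2:ℝ) ^ p := (Real.rpow_pos_of_pos (by norm_num) p).le
  have hsum : (2 * p + 1) * (1 / p) + 1 / q = 3 := by
    have h1 : (2 * p + 1) * (1 / p) = 2 + 1 / p := by field_simp
    rw [h1]; linarith
  have e1 : (c₀ * X ^ (2 * p + 1) / ((2 * p + 1) * 2 ^ p)) ^ (1 / p)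
      = c₀ ^ (1 / p) * X ^ ((2 * p + 1) * (1 / p)) / ((2 * p + 1) ^ (1 / p) * 2) := by
    rw [Real.div_rpow (by positivity) (by positivity), Real.mul_rpow hc hXP,
      Real.mul_rpow h2p.le h2pow, ← Real.rpow_mul hX,
      ← Real.rpow_mul (by norm_num : (0:ℝ) ≤ 2), mul_one_div_cancel hpne, Real.rpow_one]
  have e2 : (c₀ * X * P / (s + 1)) ^ (1 / q)
      = c₀ ^ (1 / q) * X ^ (1 / q) * P ^ (1 / q) / (s + 1) ^ (1 / q) := by
    rw [Real.div_rpow (by positivity) hs.le, Real.mul_rpow (by positivity) hP,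
      Real.mul_rpow hc hX]
  have e3 : c₀ ^ (1 / p) * c₀ ^ (1 / q) = c₀ := by
    rw [← Real.rpow_add' hc (by rw [hpq]; norm_num), hpq, Real.rpow_one]
  have e4 : X ^ ((2 * p + 1) * (1 / p)) * X ^ (1 / q) = X ^ (3:ℝ) := by
    rw [← Real.rpow_add' hX (by rw [hsum]; norm_num), hsum]
  have hnum : c₀ ^ (1 / p) * X ^ ((2 * p + 1) * (1 / p))
      * (c₀ ^ (1 / q) * X ^ (1 / q) * P ^ (1 / q)) = c₀ * (X ^ (3:ℝ) * P ^ (1 / q)) := by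
    calc c₀ ^ (1 / p) * X ^ ((2 * p + 1) * (1 / p))
          * (c₀ ^ (1 / q) * X ^ (1 / q) * P ^ (1 / q))
        = (c₀ ^ (1 / p) * c₀ ^ (1 / q))
            * (X ^ ((2 * p + 1) * (1 / p)) * X ^ (1 / q)) * P ^ (1 / q) := by ring
      _ = c₀ * (X ^ (3:ℝ) * P ^ (1 / q)) := by rw [e3, e4]; ring
  rw [e1, e2, div_mul_div_comm, hnum,
    show (2 * p + 1) ^ (1 / p) * 2 * (s + 1) ^ (1 / q)
      = 2 * (2 * p + 1) ^ (1 / p) * (s + 1) ^ (1 / q) by ring, mul_div_assoc]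

lemma sconv_integral (s : ℝ) (hs0 : 0 < s) (g : ℝ → ℝ) (c d : ℝ) (hcd : c ≤ d)
    (hconv : ∀ α β : ℝ, 0 ≤ α → 0 ≤ β → α + β = 1 →
      g (α * c + β * d) ≤ α ^ s * g c + β ^ s * g d)
    (hgint : IntervalIntegrable g volume c d) (hgc : 0 ≤ g c) (hgd : 0 ≤ g d) :
    ∫ t in c..d, g t ≤ (d - c) * (g c + g d) / (s + 1) := by
  have hs1 : (0:ℝ) < s + 1 := by linarith
  rcases eq_or_lt_of_le hcd with rfl | hlt
  · simp
  have hdc : (0:ℝ) < d - c := by linarith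
  have key : ∀ t ∈ Set.Icc c d,
      g t ≤ ((d - t) / (d - c)) ^ s * g c + ((t - c) / (d - c)) ^ s * g d := by
    intro t ht
    have harg : (d - t) / (d - c) * c + (t - c) / (d - c) * d = t := by field_simp; ring
    have h := hconv ((d - t) / (d - c)) ((t - c) / (d - c))
      (div_nonneg (by linarith [ht.2]) hdc.le) (div_nonneg (by linarith [ht.1]) hdc.le)
      (by field_simp; ring)
    rwa [harg] at h
  have c1 : Continuous fun t : ℝ => ((d - t) / (d - c)) ^ s :=
    (Real.continuous_rpow_const hs0.le).comp
      ((continuous_const.sub continuous_id).div_const (d - c))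
  have c2 : Continuous fun t : ℝ => ((t - c) / (d - c)) ^ s :=
    (Real.continuous_rpow_const hs0.le).comp
      ((continuous_id.sub continuous_const).div_const (d - c))
  have hRHSint : IntervalIntegrable
      (fun t => ((d - t) / (d - c)) ^ s * g c + ((t - c) / (d - c)) ^ s * g d) volume c d :=
    ((c1.mul continuous_const).add (c2.mul continuous_const)).intervalIntegrable c d
  have hmono := intervalIntegral.integral_mono_on hcd hgint hRHSint key
  refine hmono.trans_eq ?_
  have hI1 : ∫ t in c..d, ((d - t) / (d - c)) ^ s = (d - c) / (s + 1) := by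
    have hcong : ∀ t ∈ Set.uIcc c d, ((d - t) / (d - c)) ^ s = (d - t) ^ s / (d - c) ^ s := by
      intro t ht
      rw [Set.uIcc_of_le hcd] at ht
      exact Real.div_rpow (by linarith [ht.2]) hdc.le s
    rw [intervalIntegral.integral_congr hcong, intervalIntegral.integral_div]
    have h := intervalIntegral.integral_comp_sub_left (a := c) (b := d) (fun u => u ^ s) d
    rw [h, sub_self, integral_rpow (Or.inl (by linarith : (-1:ℝ) < s)),
      Real.zero_rpow (by positivity : s + 1 ≠ 0), sub_zero,
      Real.rpow_add_one hdc.ne' s]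
    field_simp
  have hI2 : ∫ t in c..d, ((t - c) / (d - c)) ^ s = (d - c) / (s + 1) := by
    have hcong : ∀ t ∈ Set.uIcc c d, ((t - c) / (d - c)) ^ s = (t - c) ^ s / (d - c) ^ s := by
      intro t ht
      rw [Set.uIcc_of_le hcd] at ht
      exact Real.div_rpow (by linarith [ht.1]) hdc.le s
    rw [intervalIntegral.integral_congr hcong, intervalIntegral.integral_div]
    have h := intervalIntegral.integral_comp_sub_right (a := c) (b := d) (fun u => u ^ s) c
    rw [h, sub_self, integral_rpow (Or.inl (by linarith : (-1:ℝ) < s)),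
      Real.zero_rpow (by positivity : s + 1 ≠ 0), sub_zero,
      Real.rpow_add_one hdc.ne' s]
    field_simp
  rw [intervalIntegral.integral_add (f := fun t => ((d - t) / (d - c)) ^ s * g c)
    (g := fun t => ((t - c) / (d - c)) ^ s * g d) ((c1.mul continuous_const).intervalIntegrable c d)
    ((c2.mul continuous_const).intervalIntegrable c d),
    intervalIntegral.integral_mul_const, intervalIntegral.integral_mul_const, hI1, hI2]
  ring

lemma holder_piece (p q c d e C : ℝ) (hpq : Real.HolderConjugate p q) (hcd : c ≤ d)
    (F : ℝ → ℝ) (hF : AEStronglyMeasurable F (volume.restrict (Set.Ioc c d)))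
    (hC : ∀ t ∈ Set.Ioc c d, |F t| ≤ C) :
    ∫ t in c..d, (t - e) ^ 2 / 2 * |F t|
      ≤ (∫ t in c..d, ((t - e) ^ 2 / 2) ^ p) ^ (1 / p)
        * (∫ t in c..d, |F t| ^ q) ^ (1 / q) := by
  haveI : IsFiniteMeasure (volume.restrict (Set.Ioc c d)) :=
    ⟨by rw [Measure.restrict_apply_univ]; exact measure_Ioc_lt_top⟩
  have hK : MemLp (fun t => (t - e) ^ 2 / 2) (ENNReal.ofReal p)
      (volume.restrict (Set.Ioc c d)) := by
    refine MemLp.of_bound (Continuous.aestronglyMeasurable (by continuity))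
      ((|c - e| + |d - e|) ^ 2 / 2) ?_
    filter_upwards [ae_restrict_mem measurableSet_Ioc] with t ht
    rw [Real.norm_eq_abs, abs_of_nonneg (by positivity)]
    have h1 : -(|c - e| + |d - e|) ≤ t - e := by
      have := neg_abs_le (c - e); have := abs_nonneg (d - e); have := ht.1; linarith
    have h2 : t - e ≤ |c - e| + |d - e| := by
      have := le_abs_self (d - e); have := abs_nonneg (c - e); have := ht.2; linarith
    have := sq_le_sq' h1 h2
    linarith
  have hFq : MemLp F (ENNReal.ofReal q) (volume.restrict (Set.Ioc c d)) := by
    refine MemLp.of_bound hF C ?_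
    filter_upwards [ae_restrict_mem measurableSet_Ioc] with t ht
    rw [Real.norm_eq_abs]; exact hC t ht
  have h := MeasureTheory.integral_mul_norm_le_Lp_mul_Lq
    (μ := volume.restrict (Set.Ioc c d)) hpq hK hFq
  have habs : ∀ t : ℝ, |(t - e) ^ 2 / 2| = (t - e) ^ 2 / 2 := fun t =>
    abs_of_nonneg (by positivity)
  simp_rw [Real.norm_eq_abs, habs] at h
  rw [intervalIntegral.integral_of_le hcd, intervalIntegral.integral_of_le hcd,
    intervalIntegral.integral_of_le hcd]
  exact h

lemma ibp_piece (a b c d e : ℝ) (f f' f'' : ℝ → ℝ)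
    (hf' : ∀ t ∈ Set.Icc a b, HasDerivAt f (f' t) t)
    (hf'' : ∀ t ∈ Set.Icc a b, HasDerivAt f' (f'' t) t)
    (hint : IntervalIntegrable f'' volume a b)
    (hab : a ≤ b) (hac : a ≤ c) (hcd : c ≤ d) (hdb : d ≤ b) :
    ∫ t in c..d, (t - e) ^ 2 / 2 * f'' t
      = (d - e) ^ 2 / 2 * f' d - (c - e) ^ 2 / 2 * f' c
        - ((d - e) * f d - (c - e) * f c) + ∫ t in c..d, f t := by
  have hsub : Set.uIcc c d ⊆ Set.Icc a b := by
    rw [Set.uIcc_of_le hcd]; exact Set.Icc_subset_Icc hac hdb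
  have hsub' : Set.uIcc c d ⊆ Set.uIcc a b := by
    rw [Set.uIcc_of_le hcd, Set.uIcc_of_le hab]; exact Set.Icc_subset_Icc hac hdb
  have hu : ∀ t ∈ Set.uIcc c d, HasDerivAt (fun t => (t - e) ^ 2 / 2) (t - e) t := by
    intro t _
    have h := (((hasDerivAt_id t).sub_const e).pow 2).div_const 2
    refine h.congr_deriv ?_
    simp
  have h1 : ∫ t in c..d, (t - e) ^ 2 / 2 * f'' t
      = (d - e) ^ 2 / 2 * f' d - (c - e) ^ 2 / 2 * f' c
        - ∫ t in c..d, (t - e) * f' t := by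
    exact intervalIntegral.integral_mul_deriv_eq_deriv_mul hu
      (fun t ht => hf'' t (hsub ht))
      (((continuous_id.sub continuous_const)).intervalIntegrable c d)
      (hint.mono_set hsub')
  have hf'c : ContinuousOn f' (Set.uIcc c d) := fun t ht =>
    ((hf'' t (hsub ht)).continuousAt).continuousWithinAt
  have h2 : ∫ t in c..d, (t - e) * f' t
      = (d - e) * f d - (c - e) * f c - ∫ t in c..d, 1 * f t := by
    exact intervalIntegral.integral_mul_deriv_eq_deriv_mul
      (fun t _ => (hasDerivAt_id t).sub_const e)
      (fun t ht => hf' t (hsub ht))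
      (continuous_const.intervalIntegrable c d)
      (hf'c.intervalIntegrable)
  simp only [one_mul] at h2
  rw [h1, h2]
  ring

theorem stmt7 (a b : ℝ) (ha : 0 ≤ a) (hab : a < b) (f f' f'' : ℝ → ℝ)
    (hf' : ∀ t ∈ Set.Icc a b, HasDerivAt f (f' t) t)
    (hf'' : ∀ t ∈ Set.Icc a b, HasDerivAt f' (f'' t) t)
    (hint : IntervalIntegrable f'' volume a b)
    (s : ℝ) (hs0 : 0 < s) (hs1 : s ≤ 1)
    (p q : ℝ) (hp : 1 < p) (hq : 1 < q) (hpq : 1 / p + 1 / q = 1)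
    (hconv : SConvexOn s (Set.Icc a b) (fun t => |f'' t| ^ q)) :
    ∀ x ∈ Set.Icc a ((a + b) / 2), f' x = f' (a + b - x) →
      |((1 / (b - a)) * ∫ t in a..b, f t) - (1 / 2) * (f x + f (a + b - x))|
        ≤ 1 / (2 * (b - a) * (2 * p + 1) ^ (1 / p) * (s + 1) ^ (1 / q)) *
          ((x - a) ^ 3 * (|f'' a| ^ q + |f'' x| ^ q) ^ (1 / q)
            + (a + b - 2 * x) ^ 3 / 4 * (|f'' x| ^ q + |f'' (a + b - x)| ^ q) ^ (1 / q)
            + (x - a) ^ 3 * (|f'' (a + b - x)| ^ q + |f'' b| ^ q) ^ (1 / q)) := by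
  intro x hx hfx
  obtain ⟨hax, hxm⟩ := hx
  have hba : (0:ℝ) < b - a := by linarith
  have hp0 : (0:ℝ) < p := lt_trans zero_lt_one hp
  have hq0 : (0:ℝ) < q := lt_trans zero_lt_one hq
  have hs1' : (0:ℝ) < s + 1 := by linarith
  have hxb : x ≤ b := by linarith
  have hay : a ≤ a + b - x := by linarith
  have hxy : x ≤ a + b - x := by linarith
  have hyb : a + b - x ≤ b := by linarith
  have hmy : (a + b) / 2 ≤ a + b - x := by linarith
  have hpq' : Real.HolderConjugate p q := by
    rw [Real.holderConjugate_iff]; exact ⟨hp, by simpa [one_div] using hpq⟩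
  have hGnn : ∀ t : ℝ, (0:ℝ) ≤ |f'' t| ^ q := fun t => Real.rpow_nonneg (abs_nonneg _) _
  -- pointwise bound on |f''|^q
  have hGbound : ∀ t ∈ Set.Icc a b, |f'' t| ^ q ≤ |f'' a| ^ q + |f'' b| ^ q := by
    intro t ht
    have harg : (b - t) / (b - a) * a + (t - a) / (b - a) * b = t := by field_simp; ring
    have h := hconv a ⟨le_rfl, hab.le⟩ b ⟨hab.le, le_rfl⟩ ((b - t) / (b - a))
      ((t - a) / (b - a)) (div_nonneg (by linarith [ht.2]) hba.le)
      (div_nonneg (by linarith [ht.1]) hba.le) (by field_simp; ring)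
    rw [harg] at h
    refine h.trans ?_
    have h1 : ((b - t) / (b - a)) ^ s ≤ 1 :=
      Real.rpow_le_one (div_nonneg (by linarith [ht.2]) hba.le)
        (by rw [div_le_one hba]; linarith [ht.1]) hs0.le
    have h2 : ((t - a) / (b - a)) ^ s ≤ 1 :=
      Real.rpow_le_one (div_nonneg (by linarith [ht.1]) hba.le)
        (by rw [div_le_one hba]; linarith [ht.2]) hs0.le
    have h3 := mul_le_mul_of_nonneg_right h1 (hGnn a)
    have h4 := mul_le_mul_of_nonneg_right h2 (hGnn b)
    simp only at h3 h4 ⊢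
    linarith
  -- bound on |f''|
  have hFbound : ∀ t ∈ Set.Icc a b, |f'' t| ≤ (|f'' a| ^ q + |f'' b| ^ q) ^ (1 / q) := by
    intro t ht
    have h1 : |f'' t| = (|f'' t| ^ q) ^ (1 / q) := by
      rw [← Real.rpow_mul (abs_nonneg _), mul_one_div_cancel hq0.ne', Real.rpow_one]
    rw [h1]
    exact Real.rpow_le_rpow (hGnn t) (hGbound t ht) (by positivity)
  -- integrability of |f''|^q
  have hGint : ∀ c d : ℝ, a ≤ c → c ≤ d → d ≤ b →
      IntervalIntegrable (fun t => |f'' t| ^ q) volume c d := by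
    intro c d hac hcd hdb
    rw [intervalIntegrable_iff_integrableOn_Ioc_of_le hcd]
    have hm : AEStronglyMeasurable f'' (volume.restrict (Set.Ioc c d)) :=
      hint.1.aestronglyMeasurable.mono_measure
        (Measure.restrict_mono (Set.Ioc_subset_Ioc hac hdb) le_rfl)
    refine Integrable.mono' (g := fun _ => |f'' a| ^ q + |f'' b| ^ q)
      (integrableOn_const measure_Ioc_lt_top.ne) ?_ ?_
    · have := (Real.continuous_rpow_const hq0.le).comp_aestronglyMeasurable hm.norm
      simpa [Real.norm_eq_abs] using this
    · filter_upwards [ae_restrict_mem measurableSet_Ioc] with t ht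
      rw [Real.norm_eq_abs, abs_of_nonneg (hGnn t)]
      exact hGbound t ⟨by linarith [ht.1, hac], by linarith [ht.2, hdb]⟩
  -- the per-piece bound
  have piece : ∀ c d e c₀ X : ℝ, a ≤ c → c ≤ d → d ≤ b → 0 ≤ X → 0 ≤ c₀ →
      (∫ t in c..d, ((t - e) ^ 2 / 2) ^ p = c₀ * X ^ (2 * p + 1) / ((2 * p + 1) * 2 ^ p)) →
      (d - c = c₀ * X) →
      ∫ t in c..d, (t - e) ^ 2 / 2 * |f'' t|
        ≤ c₀ * (X ^ (3:ℝ) * (|f'' c| ^ q + |f'' d| ^ q) ^ (1 / q)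
            / (2 * (2 * p + 1) ^ (1 / p) * (s + 1) ^ (1 / q))) := by
    intro c d e c₀ X hac hcd hdb hX hc₀ hker hlen
    have hcab : c ∈ Set.Icc a b := ⟨hac, hcd.trans hdb⟩
    have hdab : d ∈ Set.Icc a b := ⟨hac.trans hcd, hdb⟩
    have hm : AEStronglyMeasurable f'' (volume.restrict (Set.Ioc c d)) :=
      hint.1.aestronglyMeasurable.mono_measure
        (Measure.restrict_mono (Set.Ioc_subset_Ioc hac hdb) le_rfl)
    have h1 := holder_piece p q c d e ((|f'' a| ^ q + |f'' b| ^ q) ^ (1 / q)) hpq' hcd f'' hm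
      (fun t ht => hFbound t ⟨by linarith [ht.1], by linarith [ht.2]⟩)
    have h2 : ∫ t in c..d, |f'' t| ^ q
        ≤ (d - c) * (|f'' c| ^ q + |f'' d| ^ q) / (s + 1) := by
      refine sconv_integral s hs0 (fun t => |f'' t| ^ q) c d hcd ?_
        (hGint c d hac hcd hdb) (hGnn c) (hGnn d)
      intro α β hα hβ hαβ
      exact hconv c hcab d hdab α β hα hβ hαβ
    have hKpnn : (0:ℝ) ≤ (∫ t in c..d, ((t - e) ^ 2 / 2) ^ p) ^ (1 / p) :=
      Real.rpow_nonneg (intervalIntegral.integral_nonneg hcd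
        (fun t _ => Real.rpow_nonneg (by positivity) p)) _
    have hGintnn : (0:ℝ) ≤ ∫ t in c..d, |f'' t| ^ q :=
      intervalIntegral.integral_nonneg hcd (fun t _ => hGnn t)
    have h3 : (∫ t in c..d, |f'' t| ^ q) ^ (1 / q)
        ≤ ((d - c) * (|f'' c| ^ q + |f'' d| ^ q) / (s + 1)) ^ (1 / q) :=
      Real.rpow_le_rpow hGintnn h2 (by positivity)
    calc ∫ t in c..d, (t - e) ^ 2 / 2 * |f'' t|
        ≤ (∫ t in c..d, ((t - e) ^ 2 / 2) ^ p) ^ (1 / p)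
            * (∫ t in c..d, |f'' t| ^ q) ^ (1 / q) := h1
      _ ≤ (∫ t in c..d, ((t - e) ^ 2 / 2) ^ p) ^ (1 / p)
            * ((d - c) * (|f'' c| ^ q + |f'' d| ^ q) / (s + 1)) ^ (1 / q) :=
          mul_le_mul_of_nonneg_left h3 hKpnn
      _ = (c₀ * X ^ (2 * p + 1) / ((2 * p + 1) * 2 ^ p)) ^ (1 / p)
            * (c₀ * X * (|f'' c| ^ q + |f'' d| ^ q) / (s + 1)) ^ (1 / q) := by
          rw [hker, hlen]
      _ = c₀ * (X ^ (3:ℝ) * (|f'' c| ^ q + |f'' d| ^ q) ^ (1 / q)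
            / (2 * (2 * p + 1) ^ (1 / p) * (s + 1) ^ (1 / q))) :=
          rpow_alg p q s X (|f'' c| ^ q + |f'' d| ^ q) c₀ hp0 hq0 hpq hs1' hX
            (add_nonneg (hGnn c) (hGnn d)) hc₀
  -- kernel integrals
  have ker1 : ∫ t in a..x, ((t - a) ^ 2 / 2) ^ p
      = 1 * (x - a) ^ (2 * p + 1) / ((2 * p + 1) * 2 ^ p) := by
    rw [one_mul]; exact kerIntR p hp0 a x hax
  have ker3 : ∫ t in (a + b - x)..b, ((t - b) ^ 2 / 2) ^ p
      = 1 * (x - a) ^ (2 * p + 1) / ((2 * p + 1) * 2 ^ p) := by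
    rw [one_mul, kerIntL p hp0 (a + b - x) b hyb, show b - (a + b - x) = x - a from by ring]
  have kcont : Continuous fun t : ℝ => ((t - (a + b) / 2) ^ 2 / 2) ^ p :=
    (Real.continuous_rpow_const hp0.le).comp
      (((continuous_id.sub continuous_const).pow 2).div_const 2)
  have ker2 : ∫ t in x..(a + b - x), ((t - (a + b) / 2) ^ 2 / 2) ^ p
      = 2 * ((a + b) / 2 - x) ^ (2 * p + 1) / ((2 * p + 1) * 2 ^ p) := by
    rw [← intervalIntegral.integral_add_adjacent_intervals
      (kcont.intervalIntegrable x ((a + b) / 2))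
      (kcont.intervalIntegrable ((a + b) / 2) (a + b - x)),
      kerIntL p hp0 x ((a + b) / 2) hxm, kerIntR p hp0 ((a + b) / 2) (a + b - x) hmy,
      show a + b - x - (a + b) / 2 = (a + b) / 2 - x from by ring]
    ring
  have B1 := piece a x a 1 (x - a) le_rfl hax hxb (by linarith) zero_le_one ker1
    (one_mul (x - a)).symm
  have B2 := piece x (a + b - x) ((a + b) / 2) 2 ((a + b) / 2 - x) hax hxy hyb
    (by linarith) (by norm_num) ker2 (by ring)
  have B3 := piece (a + b - x) b b 1 (x - a) hay hyb le_rfl (by linarith) zero_le_one ker3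
    (by ring)
  -- integrability of f
  have hfc : ContinuousOn f (Set.Icc a b) := fun t ht =>
    ((hf' t ht).continuousAt).continuousWithinAt
  have hfint : ∀ c d : ℝ, a ≤ c → c ≤ d → d ≤ b → IntervalIntegrable f volume c d := by
    intro c d hac hcd hdb
    refine ContinuousOn.intervalIntegrable (hfc.mono ?_)
    rw [Set.uIcc_of_le hcd]; exact Set.Icc_subset_Icc hac hdb
  have hsplitf : (∫ t in a..x, f t) + (∫ t in x..(a + b - x), f t)
      = ∫ t in a..(a + b - x), f t :=
    intervalIntegral.integral_add_adjacent_intervals (hfint a x le_rfl hax hxb)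
      (hfint x (a + b - x) hax hxy hyb)
  have hsplitf2 : (∫ t in a..(a + b - x), f t) + (∫ t in (a + b - x)..b, f t)
      = ∫ t in a..b, f t :=
    intervalIntegral.integral_add_adjacent_intervals (hfint a (a + b - x) le_rfl hay hyb)
      (hfint (a + b - x) b hay hyb le_rfl)
  have e1 := ibp_piece a b a x a f f' f'' hf' hf'' hint hab.le le_rfl hax hxb
  have e2 := ibp_piece a b x (a + b - x) ((a + b) / 2) f f' f'' hf' hf'' hint hab.le hax hxy hyb
  have e3 := ibp_piece a b (a + b - x) b b f f' f'' hf' hf'' hint hab.le hay hyb le_rfl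
  have hkey : (∫ t in a..x, (t - a) ^ 2 / 2 * f'' t)
      + (∫ t in x..(a + b - x), (t - (a + b) / 2) ^ 2 / 2 * f'' t)
      + (∫ t in (a + b - x)..b, (t - b) ^ 2 / 2 * f'' t)
      = (∫ t in a..b, f t) - (b - a) / 2 * (f x + f (a + b - x)) := by
    rw [e1, e2, e3, ← hsplitf2, ← hsplitf, hfx]
    ring
  set I1 := ∫ t in a..x, (t - a) ^ 2 / 2 * f'' t with hI1
  set I2 := ∫ t in x..(a + b - x), (t - (a + b) / 2) ^ 2 / 2 * f'' t with hI2
  set I3 := ∫ t in (a + b - x)..b, (t - b) ^ 2 / 2 * f'' t with hI3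
  have hLHS : (1 / (b - a)) * (∫ t in a..b, f t) - (1 / 2) * (f x + f (a + b - x))
      = (I1 + I2 + I3) / (b - a) := by
    have hfeq : (∫ t in a..b, f t)
        = (I1 + I2 + I3) + (b - a) / 2 * (f x + f (a + b - x)) := by linarith [hkey]
    rw [hfeq]
    field_simp
    ring
  rw [hLHS, abs_div, abs_of_pos hba]
  -- bound the absolute values of the pieces
  have habs1 : |I1| ≤ ∫ t in a..x, (t - a) ^ 2 / 2 * |f'' t| := by
    refine (intervalIntegral.abs_integral_le_integral_abs hax).trans_eq
      (intervalIntegral.integral_congr fun t _ => ?_)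
    rw [abs_mul, abs_of_nonneg (by positivity : (0:ℝ) ≤ (t - a) ^ 2 / 2)]
  have habs2 : |I2| ≤ ∫ t in x..(a + b - x), (t - (a + b) / 2) ^ 2 / 2 * |f'' t| := by
    refine (intervalIntegral.abs_integral_le_integral_abs hxy).trans_eq
      (intervalIntegral.integral_congr fun t _ => ?_)
    rw [abs_mul, abs_of_nonneg (by positivity : (0:ℝ) ≤ (t - (a + b) / 2) ^ 2 / 2)]
  have habs3 : |I3| ≤ ∫ t in (a + b - x)..b, (t - b) ^ 2 / 2 * |f'' t| := by
    refine (intervalIntegral.abs_integral_le_integral_abs hyb).trans_eq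
      (intervalIntegral.integral_congr fun t _ => ?_)
    rw [abs_mul, abs_of_nonneg (by positivity : (0:ℝ) ≤ (t - b) ^ 2 / 2)]
  have hsum : |I1 + I2 + I3|
      ≤ 1 * ((x - a) ^ (3:ℝ) * (|f'' a| ^ q + |f'' x| ^ q) ^ (1 / q)
          / (2 * (2 * p + 1) ^ (1 / p) * (s + 1) ^ (1 / q)))
        + 2 * (((a + b) / 2 - x) ^ (3:ℝ) * (|f'' x| ^ q + |f'' (a + b - x)| ^ q) ^ (1 / q)
          / (2 * (2 * p + 1) ^ (1 / p) * (s + 1) ^ (1 / q)))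
        + 1 * ((x - a) ^ (3:ℝ) * (|f'' (a + b - x)| ^ q + |f'' b| ^ q) ^ (1 / q)
          / (2 * (2 * p + 1) ^ (1 / p) * (s + 1) ^ (1 / q))) := by
    calc |I1 + I2 + I3| ≤ |I1| + |I2| + |I3| := by
          have := abs_add_le (I1 + I2) I3
          have := abs_add_le I1 I2
          linarith
      _ ≤ _ := by
          have t1 := habs1.trans B1
          have t2 := habs2.trans B2
          have t3 := habs3.trans B3
          linarith
  have hrpow3 : ∀ X : ℝ, X ^ (3:ℝ) = X ^ (3:ℕ) := fun X => by
    rw [show (3:ℝ) = ((3:ℕ):ℝ) from by norm_num, Real.rpow_natCast]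
  rw [hrpow3, hrpow3] at hsum
  have hD : (0:ℝ) < (2 * p + 1) ^ (1 / p) := Real.rpow_pos_of_pos (by linarith) _
  have hE : (0:ℝ) < (s + 1) ^ (1 / q) := Real.rpow_pos_of_pos hs1' _
  calc |I1 + I2 + I3| / (b - a)
      ≤ (1 * ((x - a) ^ (3:ℕ) * (|f'' a| ^ q + |f'' x| ^ q) ^ (1 / q)
          / (2 * (2 * p + 1) ^ (1 / p) * (s + 1) ^ (1 / q)))
        + 2 * (((a + b) / 2 - x) ^ (3:ℕ) * (|f'' x| ^ q + |f'' (a + b - x)| ^ q) ^ (1 / q)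
          / (2 * (2 * p + 1) ^ (1 / p) * (s + 1) ^ (1 / q)))
        + 1 * ((x - a) ^ (3:ℕ) * (|f'' (a + b - x)| ^ q + |f'' b| ^ q) ^ (1 / q)
          / (2 * (2 * p + 1) ^ (1 / p) * (s + 1) ^ (1 / q)))) / (b - a) :=
        by gcongr
    _ = 1 / (2 * (b - a) * (2 * p + 1) ^ (1 / p) * (s + 1) ^ (1 / q)) *
          ((x - a) ^ 3 * (|f'' a| ^ q + |f'' x| ^ q) ^ (1 / q)
            + (a + b - 2 * x) ^ 3 / 4 * (|f'' x| ^ q + |f'' (a + b - x)| ^ q) ^ (1 / q)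
            + (x - a) ^ 3 * (|f'' (a + b - x)| ^ q + |f'' b| ^ q) ^ (1 / q)) := by
        field_simp
        ring
end

section
/- Let f : [a,b] → ℝ (a < b) be such that f′ is absolutely continuous on [a,b], f″ ∈ L¹[a,b], and |f″|^q is s-convex in the second sense on [a,b] for some fixed s ∈ (0,1], where q > 1 and 1/p + 1/q = 1. Then |(1/(b−a))∫_a^b f(t) dt − f((a+b)/2)| ≤ ((b−a)²/(16(s+1)^{1/q}(2p+1)^{1/p}))[(|f″(a)|^q + |f″((a+b)/2)|^q)^{1/q} + (|f″((a+b)/2)|^q + |f″(b)|^q)^{1/q}]. -/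
open MeasureTheory Set intervalIntegral

open MeasureTheory Set intervalIntegral
set_option maxHeartbeats 800000
open MeasureTheory Set intervalIntegral

lemma parts_id (c d x : ℝ) (hcd : c ≤ d) (f f' f'' : ℝ → ℝ)
    (hf' : ∀ t ∈ Set.Icc c d, HasDerivAt f (f' t) t)
    (hf'' : ∀ t ∈ Set.Icc c d, HasDerivAt f' (f'' t) t)
    (hint : IntervalIntegrable f'' volume c d) :
    ∫ t in c..d, (t - x) ^ 2 / 2 * f'' t =
      (d - x) ^ 2 / 2 * f' d - (c - x) ^ 2 / 2 * f' c
        - ((d - x) * f d - (c - x) * f c) + ∫ t in c..d, f t := by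
  have huIcc : Set.uIcc c d = Set.Icc c d := Set.uIcc_of_le hcd
  have hfc : ContinuousOn f (Set.Icc c d) := fun t ht => (hf' t ht).continuousAt.continuousWithinAt
  have hf'c : ContinuousOn f' (Set.Icc c d) := fun t ht => (hf'' t ht).continuousAt.continuousWithinAt
  have hfint : IntervalIntegrable f volume c d := (huIcc ▸ hfc).intervalIntegrable
  have hf'int : IntervalIntegrable f' volume c d := (huIcc ▸ hf'c).intervalIntegrable
  have h1 : ∫ t in c..d, (t - x) ^ 2 / 2 * f'' t =
      (d - x) ^ 2 / 2 * f' d - (c - x) ^ 2 / 2 * f' c - ∫ t in c..d, (t - x) * f' t := by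
    apply intervalIntegral.integral_mul_deriv_eq_deriv_mul (u := fun t => (t - x) ^ 2 / 2) (u' := fun t => t - x)
    · intro t _
      have : HasDerivAt (fun t : ℝ => (t - x) ^ 2 / 2) ((2 * (t - x) ^ 1 * 1) / 2) t := by
        exact (((hasDerivAt_id t).sub_const x).pow 2).div_const 2
      simpa using this
    · intro t ht; exact hf'' t (huIcc ▸ ht)
    · exact (Continuous.continuousOn (by continuity)).intervalIntegrable
    · exact hint
  have h2 : ∫ t in c..d, (t - x) * f' t =
      (d - x) * f d - (c - x) * f c - ∫ t in c..d, 1 * f t := by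
    apply intervalIntegral.integral_mul_deriv_eq_deriv_mul (u := fun t => t - x) (u' := fun t => (1 : ℝ))
    · intro t _; exact (hasDerivAt_id t).sub_const x
    · intro t ht; exact hf' t (huIcc ▸ ht)
    · exact (Continuous.continuousOn (by continuity)).intervalIntegrable
    · exact hf'int
  rw [h1, h2]
  simp only [one_mul]
  ring

lemma memLp_of_bdd {g : ℝ → ℝ} {c d C : ℝ} (r : ENNReal)
    (hmeas : AEStronglyMeasurable g (volume.restrict (Set.Ioc c d)))
    (hb : ∀ t ∈ Set.Ioc c d, ‖g t‖ ≤ C) :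
    MemLp g r (volume.restrict (Set.Ioc c d)) := by
  haveI : IsFiniteMeasure (volume.restrict (Set.Ioc c d)) := by
    constructor
    rw [Measure.restrict_apply_univ]
    simp [Real.volume_Ioc]
  exact MemLp.of_bound hmeas C ((ae_restrict_iff' measurableSet_Ioc).2 (ae_of_all _ hb))

lemma moment_rpow (c d e : ℝ) (he : 0 < e) :
    ∫ t in c..d, (t - c) ^ e = (d - c) ^ (e + 1) / (e + 1) := by
  rw [intervalIntegral.integral_comp_sub_right (fun u => u ^ e) c]
  simp only [sub_self]
  rw [integral_rpow (Or.inl (by linarith))]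
  rw [Real.zero_rpow (by positivity)]
  ring

lemma moment_rpow' (c d e : ℝ) (he : 0 < e) :
    ∫ t in c..d, (d - t) ^ e = (d - c) ^ (e + 1) / (e + 1) := by
  rw [intervalIntegral.integral_comp_sub_left (fun u => u ^ e) d]
  simp only [sub_self]
  rw [integral_rpow (Or.inl (by linarith))]
  rw [Real.zero_rpow (by positivity)]
  ring

lemma holder_half (c d p q s : ℝ) (hcd : c < d) (hp : 1 < p) (hq : 1 < q)
    (hpq : 1 / p + 1 / q = 1) (hs0 : 0 < s)
    (g : ℝ → ℝ) (A B : ℝ) (hA : 0 ≤ A) (hB : 0 ≤ B)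
    (hmeas : AEStronglyMeasurable g (volume.restrict (Set.Ioc c d)))
    (hbound : ∀ t ∈ Set.Icc c d,
      |g t| ^ q ≤ ((d - t) / (d - c)) ^ s * A + ((t - c) / (d - c)) ^ s * B)
    (K : ℝ → ℝ) (hKcont : Continuous K) (hKnn : ∀ t ∈ Set.Icc c d, 0 ≤ K t)
    (hKbd : ∀ t ∈ Set.Icc c d, K t ≤ (d - c) ^ 2 / 2)
    (hKint : ∫ t in c..d, K t ^ p = (d - c) ^ (2 * p + 1) / ((2 * p + 1) * 2 ^ p)) :
    ∫ t in c..d, K t * |g t| ≤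
      (d - c) ^ (3 : ℝ) / (2 * (2 * p + 1) ^ (1 / p) * (s + 1) ^ (1 / q)) * (A + B) ^ (1 / q) := by
  have hdc : (0 : ℝ) < d - c := by linarith
  have hq0 : (0 : ℝ) < q := by linarith
  have hp0 : (0 : ℝ) < p := by linarith
  have hconj : p.HolderConjugate q := Real.holderConjugate_iff.2 ⟨hp, by simpa [one_div] using hpq⟩
  set μ := volume.restrict (Set.Ioc c d) with hμ
  -- pointwise bounds
  have hgq_bd : ∀ t ∈ Set.Icc c d, |g t| ^ q ≤ A + B := by
    intro t ht
    refine (hbound t ht).trans ?_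
    have h1 : ((d - t) / (d - c)) ^ s ≤ 1 :=
      Real.rpow_le_one (div_nonneg (by linarith [ht.2]) hdc.le) (by
        rw [div_le_one hdc]; linarith [ht.1]) hs0.le
    have h2 : ((t - c) / (d - c)) ^ s ≤ 1 :=
      Real.rpow_le_one (div_nonneg (by linarith [ht.1]) hdc.le) (by
        rw [div_le_one hdc]; linarith [ht.2]) hs0.le
    nlinarith [mul_le_of_le_one_left hA h1, mul_le_of_le_one_left hB h2]
  have hg_bd : ∀ t ∈ Set.Ioc c d, |g t| ≤ (A + B) ^ (1 / q) := by
    intro t ht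
    have h := hgq_bd t (Set.Ioc_subset_Icc_self ht)
    have h2 : (|g t| ^ q) ^ (1 / q) ≤ (A + B) ^ (1 / q) :=
      Real.rpow_le_rpow (by positivity) h (by positivity)
    rwa [← Real.rpow_mul (abs_nonneg _), mul_one_div, div_self hq0.ne', Real.rpow_one] at h2
  -- measurability
  have habs : AEStronglyMeasurable (fun t => |g t|) μ := by
    simpa [Real.norm_eq_abs] using hmeas.norm
  have hgq_meas : AEStronglyMeasurable (fun t => |g t| ^ q) μ := by
    have : Continuous fun y : ℝ => y ^ q :=
      continuous_iff_continuousAt.2 fun x => Real.continuousAt_rpow_const x q (Or.inr hq0.le)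
    exact this.comp_aestronglyMeasurable habs
  -- Memℒp
  have hKmem : MemLp K (ENNReal.ofReal p) μ :=
    memLp_of_bdd _ hKcont.aestronglyMeasurable (fun t ht => by
      rw [Real.norm_eq_abs, abs_of_nonneg (hKnn t (Set.Ioc_subset_Icc_self ht))]
      exact hKbd t (Set.Ioc_subset_Icc_self ht))
  have hgmem : MemLp (fun t => |g t|) (ENNReal.ofReal q) μ :=
    memLp_of_bdd _ habs (fun t ht => by
      rw [Real.norm_eq_abs, abs_abs]; exact hg_bd t ht)
  -- Hölder
  have holder : ∫ t in c..d, K t * |g t| ≤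
      (∫ t, K t ^ p ∂μ) ^ (1 / p) * (∫ t, |g t| ^ q ∂μ) ^ (1 / q) := by
    rw [intervalIntegral.integral_of_le hcd.le]
    exact integral_mul_le_Lp_mul_Lq_of_nonneg hconj
      ((ae_restrict_iff' measurableSet_Ioc).2
        (ae_of_all _ fun t ht => hKnn t (Set.Ioc_subset_Icc_self ht)))
      (ae_of_all _ fun t => abs_nonneg _) hKmem hgmem
  -- value of the kernel integral
  have hKval : (∫ t, K t ^ p ∂μ) = (d - c) ^ (2 * p + 1) / ((2 * p + 1) * 2 ^ p) := by
    rw [intervalIntegral.integral_of_le hcd.le] at hKint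
    exact hKint
  -- continuity of power functions
  have hpsi_cont : Continuous (fun y : ℝ => y ^ s) :=
    continuous_iff_continuousAt.2 fun x => Real.continuousAt_rpow_const x s (Or.inr hs0.le)
  have hs1' : (0:ℝ) < s + 1 := by linarith
  have hint1 : ∫ t in c..d, ((d - t) / (d - c)) ^ s = (d - c) / (s + 1) := by
    rw [intervalIntegral.integral_congr (g := fun t => (d - t) ^ s / (d - c) ^ s)
      (fun t ht => by
        have ht' : t ∈ Set.Icc c d := by rwa [Set.uIcc_of_le hcd.le] at ht
        exact Real.div_rpow (by linarith [ht'.2]) hdc.le s)]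
    rw [intervalIntegral.integral_div, moment_rpow' c d s hs0]
    rw [Real.rpow_add hdc, Real.rpow_one]
    have : ((d - c) : ℝ) ^ s ≠ 0 := by positivity
    field_simp
  have hint2 : ∫ t in c..d, ((t - c) / (d - c)) ^ s = (d - c) / (s + 1) := by
    rw [intervalIntegral.integral_congr (g := fun t => (t - c) ^ s / (d - c) ^ s)
      (fun t ht => by
        have ht' : t ∈ Set.Icc c d := by rwa [Set.uIcc_of_le hcd.le] at ht
        exact Real.div_rpow (by linarith [ht'.1]) hdc.le s)]
    rw [intervalIntegral.integral_div, moment_rpow c d s hs0]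
    rw [Real.rpow_add hdc, Real.rpow_one]
    have : ((d - c) : ℝ) ^ s ≠ 0 := by positivity
    field_simp
  have hψ1c : Continuous (fun t : ℝ => ((d - t) / (d - c)) ^ s) :=
    hpsi_cont.comp ((continuous_const.sub continuous_id).div_const _)
  have hψ2c : Continuous (fun t : ℝ => ((t - c) / (d - c)) ^ s) :=
    hpsi_cont.comp ((continuous_id.sub continuous_const).div_const _)
  -- bound the |g|^q integral
  have hgq_ii : IntervalIntegrable (fun t => |g t| ^ q) volume c d := by
    rw [intervalIntegrable_iff_integrableOn_Ioc_of_le hcd.le]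
    exact memLp_one_iff_integrable.mp (memLp_of_bdd 1 hgq_meas fun t ht => by
      rw [Real.norm_eq_abs, abs_of_nonneg (by positivity)]
      exact hgq_bd t (Set.Ioc_subset_Icc_self ht))
  have hφ_ii : IntervalIntegrable
      (fun t => ((d - t) / (d - c)) ^ s * A + ((t - c) / (d - c)) ^ s * B) volume c d :=
    ((hψ1c.mul continuous_const).add (hψ2c.mul continuous_const)).intervalIntegrable c d
  have hgq_le : (∫ t, |g t| ^ q ∂μ) ≤ (d - c) / (s + 1) * (A + B) := by
    have mono := intervalIntegral.integral_mono_on hcd.le hgq_ii hφ_ii hbound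
    rw [intervalIntegral.integral_of_le hcd.le] at mono
    refine mono.trans ?_
    rw [intervalIntegral.integral_add (f := fun t => ((d - t) / (d - c)) ^ s * A) (g := fun t => ((t - c) / (d - c)) ^ s * B) ((hψ1c.mul continuous_const).intervalIntegrable c d)
      ((hψ2c.mul continuous_const).intervalIntegrable c d)]
    rw [intervalIntegral.integral_mul_const, intervalIntegral.integral_mul_const, hint1, hint2, mul_add]
  -- combine
  have step2 : (∫ t, K t ^ p ∂μ) ^ (1 / p) * (∫ t, |g t| ^ q ∂μ) ^ (1 / q) ≤
      ((d - c) ^ (2 * p + 1) / ((2 * p + 1) * 2 ^ p)) ^ (1 / p) *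
        ((d - c) / (s + 1) * (A + B)) ^ (1 / q) := by
    rw [hKval]
    refine mul_le_mul_of_nonneg_left ?_ (by positivity)
    exact Real.rpow_le_rpow (integral_nonneg fun t => by positivity) hgq_le (by positivity)
  refine (holder.trans step2).trans (le_of_eq ?_)
  have h2p1 : (0:ℝ) < 2 * p + 1 := by linarith
  have h2 : ((2:ℝ) ^ p) ^ (1 / p) = 2 := by
    rw [← Real.rpow_mul (by norm_num), mul_one_div, div_self hp0.ne', Real.rpow_one]
  rw [Real.div_rpow (by positivity) (by positivity),
      Real.mul_rpow h2p1.le (by positivity), h2,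
      Real.mul_rpow (by positivity) (by positivity),
      Real.div_rpow hdc.le hs1'.le,
      ← Real.rpow_mul hdc.le]
  have hexp : (2 * p + 1) * (1 / p) + 1 / q = 3 := by
    have : (2 * p + 1) * (1 / p) = 2 + 1 / p := by field_simp
    rw [this, add_assoc, hpq]; norm_num
  have hDD : (d - c) ^ ((2 * p + 1) / p) * (d - c) ^ (1 / q) = (d - c) ^ (3:ℝ) := by
    rw [← Real.rpow_add hdc, ← mul_one_div, hexp]
  have hx1 : ((2 * p + 1):ℝ) ^ (1/p) ≠ 0 := by positivity
  have hx2 : ((s + 1):ℝ) ^ (1/q) ≠ 0 := by positivity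
  field_simp
  linear_combination ((A + B) ^ (1/q)) * hDD
lemma kernel_int1 (c d p : ℝ) (hcd : c ≤ d) (hp : 1 < p) :
    ∫ t in c..d, ((t - c) ^ 2 / 2) ^ p = (d - c) ^ (2 * p + 1) / ((2 * p + 1) * 2 ^ p) := by
  have hp0 : (0:ℝ) < 2 * p := by linarith
  rw [intervalIntegral.integral_congr (g := fun t => (t - c) ^ (2 * p) / 2 ^ p)
    (fun t ht => by
      have ht' : t ∈ Set.Icc c d := by rwa [Set.uIcc_of_le hcd] at ht
      rw [Real.div_rpow (by positivity) (by norm_num)]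
      congr 1
      rw [show ((t - c) ^ 2 : ℝ) = (t - c) ^ (2:ℕ) by norm_num,
        ← Real.rpow_natCast_mul (by linarith [ht'.1]) 2 p]
      norm_num)]
  rw [intervalIntegral.integral_div, moment_rpow c d (2 * p) hp0]
  rw [div_div]

lemma kernel_int2 (c d p : ℝ) (hcd : c ≤ d) (hp : 1 < p) :
    ∫ t in c..d, ((t - d) ^ 2 / 2) ^ p = (d - c) ^ (2 * p + 1) / ((2 * p + 1) * 2 ^ p) := by
  have hp0 : (0:ℝ) < 2 * p := by linarith
  rw [intervalIntegral.integral_congr (g := fun t => (d - t) ^ (2 * p) / 2 ^ p)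
    (fun t ht => by
      have ht' : t ∈ Set.Icc c d := by rwa [Set.uIcc_of_le hcd] at ht
      rw [show ((t - d) ^ 2 : ℝ) = (d - t) ^ 2 by ring]
      rw [Real.div_rpow (by positivity) (by norm_num)]
      congr 1
      rw [show ((d - t) ^ 2 : ℝ) = (d - t) ^ (2:ℕ) by norm_num,
        ← Real.rpow_natCast_mul (by linarith [ht'.2]) 2 p]
      norm_num)]
  rw [intervalIntegral.integral_div, moment_rpow' c d (2 * p) hp0]
  rw [div_div]
theorem stmt9 (a b : ℝ) (ha : 0 ≤ a) (hab : a < b) (f f' f'' : ℝ → ℝ)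
    (hf' : ∀ t ∈ Set.Icc a b, HasDerivAt f (f' t) t)
    (hf'' : ∀ t ∈ Set.Icc a b, HasDerivAt f' (f'' t) t)
    (hint : IntervalIntegrable f'' volume a b)
    (s : ℝ) (hs0 : 0 < s) (hs1 : s ≤ 1)
    (p q : ℝ) (hp : 1 < p) (hq : 1 < q) (hpq : 1 / p + 1 / q = 1)
    (hconv : SConvexOn s (Set.Icc a b) (fun t => |f'' t| ^ q)) :
    |((1 / (b - a)) * ∫ t in a..b, f t) - f ((a + b) / 2)|
      ≤ (b - a) ^ 2 / (16 * (s + 1) ^ (1 / q) * (2 * p + 1) ^ (1 / p)) *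
          ((|f'' a| ^ q + |f'' ((a + b) / 2)| ^ q) ^ (1 / q)
            + (|f'' ((a + b) / 2)| ^ q + |f'' b| ^ q) ^ (1 / q)) := by
  set m : ℝ := (a + b) / 2 with hm
  have ham : a < m := by rw [hm]; linarith
  have hmb : m < b := by rw [hm]; linarith
  have hsub1 : Set.Icc a m ⊆ Set.Icc a b := Set.Icc_subset_Icc le_rfl hmb.le
  have hsub2 : Set.Icc m b ⊆ Set.Icc a b := Set.Icc_subset_Icc ham.le le_rfl
  have huIcc1 : Set.uIcc a m ⊆ Set.uIcc a b := by
    rw [Set.uIcc_of_le ham.le, Set.uIcc_of_le hab.le]; exact hsub1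
  have huIcc2 : Set.uIcc m b ⊆ Set.uIcc a b := by
    rw [Set.uIcc_of_le hmb.le, Set.uIcc_of_le hab.le]; exact hsub2
  have hint1 : IntervalIntegrable f'' volume a m := hint.mono_set huIcc1
  have hint2 : IntervalIntegrable f'' volume m b := hint.mono_set huIcc2
  -- the identity
  have I1 := parts_id a m a ham.le f f' f'' (fun t ht => hf' t (hsub1 ht))
    (fun t ht => hf'' t (hsub1 ht)) hint1
  have I2 := parts_id m b b hmb.le f f' f'' (fun t ht => hf' t (hsub2 ht))
    (fun t ht => hf'' t (hsub2 ht)) hint2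
  have hfc : ContinuousOn f (Set.Icc a b) := fun t ht => (hf' t ht).continuousAt.continuousWithinAt
  have hfint : IntervalIntegrable f volume a b := by
    apply ContinuousOn.intervalIntegrable; rwa [Set.uIcc_of_le hab.le]
  have hsum : (∫ t in a..m, f t) + ∫ t in m..b, f t = ∫ t in a..b, f t :=
    intervalIntegral.integral_add_adjacent_intervals
      (hfint.mono_set huIcc1) (hfint.mono_set huIcc2)
  have key : (∫ t in a..m, (t - a) ^ 2 / 2 * f'' t) + (∫ t in m..b, (t - b) ^ 2 / 2 * f'' t)
      = (∫ t in a..b, f t) - (b - a) * f m := by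
    rw [I1, I2, ← hsum, hm]; ring
  -- measurability on halves
  have hmeas1 : AEStronglyMeasurable f'' (volume.restrict (Set.Ioc a m)) :=
    ((intervalIntegrable_iff_integrableOn_Ioc_of_le ham.le).mp hint1).aestronglyMeasurable
  have hmeas2 : AEStronglyMeasurable f'' (volume.restrict (Set.Ioc m b)) :=
    ((intervalIntegrable_iff_integrableOn_Ioc_of_le hmb.le).mp hint2).aestronglyMeasurable
  -- s-convexity bounds
  have hconv1 : ∀ t ∈ Set.Icc a m,
      |f'' t| ^ q ≤ ((m - t) / (m - a)) ^ s * |f'' a| ^ q + ((t - a) / (m - a)) ^ s * |f'' m| ^ q := by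
    intro t ht
    have hma : (0:ℝ) < m - a := by linarith
    have hα : 0 ≤ (m - t) / (m - a) := div_nonneg (by linarith [ht.2]) hma.le
    have hβ : 0 ≤ (t - a) / (m - a) := div_nonneg (by linarith [ht.1]) hma.le
    have hαβ : (m - t) / (m - a) + (t - a) / (m - a) = 1 := by field_simp; ring
    have hc := hconv a (Set.left_mem_Icc.2 hab.le) m (hsub1 (Set.right_mem_Icc.2 ham.le))
      _ _ hα hβ hαβ
    have harg : (m - t) / (m - a) * a + (t - a) / (m - a) * m = t := by field_simp; ring
    rw [harg] at hc
    exact hc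
  have hconv2 : ∀ t ∈ Set.Icc m b,
      |f'' t| ^ q ≤ ((b - t) / (b - m)) ^ s * |f'' m| ^ q + ((t - m) / (b - m)) ^ s * |f'' b| ^ q := by
    intro t ht
    have hbm : (0:ℝ) < b - m := by linarith
    have hα : 0 ≤ (b - t) / (b - m) := div_nonneg (by linarith [ht.2]) hbm.le
    have hβ : 0 ≤ (t - m) / (b - m) := div_nonneg (by linarith [ht.1]) hbm.le
    have hαβ : (b - t) / (b - m) + (t - m) / (b - m) = 1 := by field_simp; ring
    have hc := hconv m (hsub2 (Set.left_mem_Icc.2 hmb.le)) b (Set.right_mem_Icc.2 hab.le)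
      _ _ hα hβ hαβ
    have harg : (b - t) / (b - m) * m + (t - m) / (b - m) * b = t := by field_simp; ring
    rw [harg] at hc
    exact hc
  -- Hölder bounds on both halves
  have H1 := holder_half a m p q s ham hp hq hpq hs0 f'' (|f'' a| ^ q) (|f'' m| ^ q)
    (by positivity) (by positivity) hmeas1 hconv1 (fun t => (t - a) ^ 2 / 2)
    (((continuous_id.sub continuous_const).pow 2).div_const 2) (fun t ht => by positivity)
    (fun t ht => by nlinarith [ht.1, ht.2]) (kernel_int1 a m p ham.le hp)
  have H2 := holder_half m b p q s hmb hp hq hpq hs0 f'' (|f'' m| ^ q) (|f'' b| ^ q)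
    (by positivity) (by positivity) hmeas2 hconv2 (fun t => (t - b) ^ 2 / 2)
    (((continuous_id.sub continuous_const).pow 2).div_const 2) (fun t ht => by positivity)
    (fun t ht => by nlinarith [ht.1, ht.2]) (kernel_int2 m b p hmb.le hp)
  -- absolute value into the integral
  have habs1 : |∫ t in a..m, (t - a) ^ 2 / 2 * f'' t| ≤ ∫ t in a..m, (t - a) ^ 2 / 2 * |f'' t| := by
    refine (intervalIntegral.abs_integral_le_integral_abs ham.le).trans (le_of_eq ?_)
    refine intervalIntegral.integral_congr fun t ht => ?_
    rw [abs_mul, abs_of_nonneg (by positivity : (0:ℝ) ≤ (t - a) ^ 2 / 2)]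
  have habs2 : |∫ t in m..b, (t - b) ^ 2 / 2 * f'' t| ≤ ∫ t in m..b, (t - b) ^ 2 / 2 * |f'' t| := by
    refine (intervalIntegral.abs_integral_le_integral_abs hmb.le).trans (le_of_eq ?_)
    refine intervalIntegral.integral_congr fun t ht => ?_
    rw [abs_mul, abs_of_nonneg (by positivity : (0:ℝ) ≤ (t - b) ^ 2 / 2)]
  -- final assembly
  have hba : (0:ℝ) < b - a := by linarith
  have lhs_eq : |((1 / (b - a)) * ∫ t in a..b, f t) - f m|
      = (1 / (b - a)) * |(∫ t in a..b, f t) - (b - a) * f m| := by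
    have e : ((1 / (b - a)) * ∫ t in a..b, f t) - f m
        = (1 / (b - a)) * ((∫ t in a..b, f t) - (b - a) * f m) := by
      field_simp
    rw [e, abs_mul, abs_of_pos (show (0:ℝ) < 1 / (b - a) by positivity)]
  rw [lhs_eq, ← key]
  have tri : |(∫ t in a..m, (t - a) ^ 2 / 2 * f'' t) + (∫ t in m..b, (t - b) ^ 2 / 2 * f'' t)|
      ≤ (m - a) ^ (3:ℝ) / (2 * (2 * p + 1) ^ (1 / p) * (s + 1) ^ (1 / q)) *
          (|f'' a| ^ q + |f'' m| ^ q) ^ (1 / q)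
        + (b - m) ^ (3:ℝ) / (2 * (2 * p + 1) ^ (1 / p) * (s + 1) ^ (1 / q)) *
          (|f'' m| ^ q + |f'' b| ^ q) ^ (1 / q) :=
    (abs_add_le _ _).trans (add_le_add (habs1.trans H1) (habs2.trans H2))
  refine (mul_le_mul_of_nonneg_left tri (by positivity)).trans (le_of_eq ?_)
  have hma3 : (m - a) ^ (3:ℝ) = (b - a) ^ 3 / 8 := by
    rw [show ((3:ℝ)) = ((3:ℕ):ℝ) by norm_num, Real.rpow_natCast, hm]; ring
  have hbm3 : (b - m) ^ (3:ℝ) = (b - a) ^ 3 / 8 := by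
    rw [show ((3:ℝ)) = ((3:ℕ):ℝ) by norm_num, Real.rpow_natCast, hm]; ring
  rw [hma3, hbm3]
  have hx1 : ((2 * p + 1):ℝ) ^ (1 / p) ≠ 0 := by positivity
  have hx2 : ((s + 1):ℝ) ^ (1 / q) ≠ 0 := by positivity
  field_simp
  ring
end
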